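/- arXiv:1812.08503 — 9 statements merged into one kernel-verified Lean document; each statement's English description precedes it below -/
import Mathlib

section
/- If f is in the class U (analytic on the unit disk, f(0)=0, f'(0)=1, and |(z/f(z))^2 f'(z) - 1| < 1 for all z in the unit disk), then there exists a function ω analytic on the unit disk with ω(0)=ω'(0)=0 and |ω(z)|<1 for all z, such that z/f(z) = 1 - a₂ z - z ∫₀^z ω(t)/t² dt, where a₂ = f''(0)/2. -/
open Complex Metric

theorem stmt_0 (f : ℂ → ℂ)
    (hf : AnalyticOn ℂ f (ball 0 1))
    (hf0 : f 0 = 0) (hf1 : deriv f 0 = 1)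
    (hU : ∀ z ∈ ball (0:ℂ) 1, z ≠ 0 → ‖(z / f z) ^ 2 * deriv f z - 1‖ < 1) :
    ∃ ω : ℂ → ℂ, AnalyticOn ℂ ω (ball 0 1) ∧ ω 0 = 0 ∧ deriv ω 0 = 0 ∧
      (∀ z ∈ ball (0:ℂ) 1, ‖ω z‖ < 1) ∧
      ∀ z ∈ ball (0:ℂ) 1, z ≠ 0 →
        z / f z = 1 - (iteratedDeriv 2 f 0 / 2) * z
          - z * ∫ t in (0:ℝ)..1, (ω (t • z) / (t • z) ^ 2) * z := by
  have hopen : IsOpen (ball (0:ℂ) 1) := isOpen_ball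
  rw [hopen.analyticOn_iff_analyticOnNhd] at hf
  have h0mem : (0:ℂ) ∈ ball (0:ℂ) 1 := by simp
  -- dslope of an analytic function on the ball is analytic on the ball
  have hds : ∀ g : ℂ → ℂ, AnalyticOnNhd ℂ g (ball 0 1) →
      AnalyticOnNhd ℂ (dslope g 0) (ball 0 1) := by
    intro g hg z hz
    rcases eq_or_ne z 0 with rfl | hz0
    · rcases hg 0 h0mem with ⟨p, hp⟩
      exact ⟨p.fslope, hp.has_fpower_series_dslope_fslope⟩
    · have h1 : AnalyticAt ℂ (fun w => w⁻¹ * (g w - g 0)) z :=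
        ((analyticAt_id).inv hz0).mul ((hg z hz).sub analyticAt_const)
      apply h1.congr
      filter_upwards [isOpen_ne.mem_nhds hz0] with w hw
      rw [dslope_of_ne _ hw, slope_def_field]
      field_simp
      ring
  set u : ℂ → ℂ := dslope f 0 with hu_def
  have hu : AnalyticOnNhd ℂ u (ball 0 1) := hds f hf
  have hu0 : u 0 = 1 := by rw [hu_def, dslope_same, hf1]
  have hfu : ∀ z : ℂ, f z = z * u z := by
    intro z
    rcases eq_or_ne z 0 with rfl | hz
    · simp [hf0]
    · rw [hu_def, dslope_of_ne _ hz, slope_def_field, hf0]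
      field_simp
      ring
  have hune : ∀ z ∈ ball (0:ℂ) 1, u z ≠ 0 := by
    intro z hz h0
    rcases eq_or_ne z 0 with rfl | hz0
    · rw [hu0] at h0; exact one_ne_zero h0
    · have hfz : f z = 0 := by rw [hfu z, h0, mul_zero]
      have := hU z hz hz0
      rw [hfz] at this
      simp at this
  have hfne : ∀ z ∈ ball (0:ℂ) 1, z ≠ 0 → f z ≠ 0 := by
    intro z hz hz0
    rw [hfu z]
    exact mul_ne_zero hz0 (hune z hz)
  -- a₂ = deriv u 0 = iteratedDeriv 2 f 0 / 2
  have ha2 : iteratedDeriv 2 f 0 / 2 = deriv u 0 := by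
    rcases hf 0 h0mem with ⟨p, hp⟩
    have h1 : deriv u 0 = p.coeff 2 := by
      rw [hu_def, hp.has_fpower_series_dslope_fslope.deriv]
      have := p.coeff_fslope (n := 1)
      rw [← this]
      rfl
    rcases hp with ⟨r, hball⟩
    have h2 := hball.factorial_smul (1:ℂ) 2
    rw [iteratedDeriv_eq_iteratedFDeriv, ← h2, h1]
    have : (p 2 fun _ => (1:ℂ)) = p.coeff 2 := rfl
    rw [this]
    simp [Nat.factorial]
  set V : ℂ → ℂ := fun z => dslope u 0 z / u z - deriv u 0 with hV_def
  have hV : AnalyticOnNhd ℂ V (ball 0 1) :=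
    (((hds u hu).div hu hune).sub analyticOnNhd_const)
  have hV0 : V 0 = 0 := by
    rw [hV_def]; simp [dslope_same, hu0]
  have hVeq : ∀ z ∈ ball (0:ℂ) 1, z ≠ 0 → V z = 1/z - 1/f z - deriv u 0 := by
    intro z hz hz0
    rw [hV_def]
    simp only
    rw [dslope_of_ne _ hz0, slope_def_field, hu0, hfu z]
    have h1 := hune z hz
    field_simp
    ring
  set v : ℂ → ℂ := deriv V with hv_def
  have hv : AnalyticOnNhd ℂ v (ball 0 1) := hV.deriv
  -- key: z^2 * v z = U_f z off the origin
  have hkey : ∀ z ∈ ball (0:ℂ) 1, z ≠ 0 → z^2 * v z = (z / f z)^2 * deriv f z - 1 := by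
    intro z hz hz0
    have hfz := hfne z hz hz0
    have hfd : HasDerivAt f (deriv f z) z := (hf z hz).differentiableAt.hasDerivAt
    have hW : HasDerivAt (fun w => 1/w - 1/f w - deriv u 0)
        (-(z^2)⁻¹ - (-(deriv f z) / f z ^ 2)) z := by
      simpa [one_div] using (((hasDerivAt_inv hz0).sub (hfd.inv hfz)).sub_const (deriv u 0))
    have hEE : V =ᶠ[nhds z] (fun w => 1/w - 1/f w - deriv u 0) := by
      have ho : IsOpen (ball (0:ℂ) 1 ∩ {w | w ≠ 0}) := hopen.inter isOpen_ne
      filter_upwards [ho.mem_nhds ⟨hz, hz0⟩] with w hw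
      exact hVeq w hw.1 hw.2
    have : v z = -(z^2)⁻¹ - (-(deriv f z) / f z ^ 2) := by
      rw [hv_def, hEE.deriv_eq, hW.deriv]
    rw [this]
    field_simp
    ring
  refine ⟨fun z => z^2 * v z, ?_, by simp, ?_, ?_, ?_⟩
  · rw [hopen.analyticOn_iff_analyticOnNhd]
    exact (analyticOnNhd_id.pow 2).mul hv
  · have h1 : HasDerivAt (fun z : ℂ => z^2 * v z)
        ((2 * (0:ℂ)^1) * v 0 + 0^2 * deriv v 0) 0 := by
      exact (hasDerivAt_pow 2 0).mul ((hv 0 h0mem).differentiableAt.hasDerivAt)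
    rw [h1.deriv]; simp
  · intro z hz
    rcases eq_or_ne z 0 with rfl | hz0
    · simp
    · show ‖z^2 * v z‖ < 1
      rw [hkey z hz hz0]; exact hU z hz hz0
  · intro z hz hz0
    have hseg : ∀ t : ℝ, t ∈ Set.uIcc (0:ℝ) 1 → t • z ∈ ball (0:ℂ) 1 := by
      intro t ht
      rw [Set.uIcc_of_le zero_le_one] at ht
      rw [mem_ball_zero_iff] at hz ⊢
      rw [norm_smul]
      calc ‖t‖ * ‖z‖ ≤ 1 * ‖z‖ := by
            apply mul_le_mul_of_nonneg_right _ (norm_nonneg z)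
            rw [Real.norm_eq_abs, abs_le]; exact ⟨by linarith [ht.1], ht.2⟩
        _ = ‖z‖ := one_mul _
        _ < 1 := hz
    have hderiv : ∀ t ∈ Set.uIcc (0:ℝ) 1,
        HasDerivAt (fun t : ℝ => V (t • z)) (z • v (t • z)) t := by
      intro t ht
      have hγ : HasDerivAt (fun t : ℝ => t • z) z t := by
        have h1 : HasDerivAt (fun t : ℝ => ((t:ℂ) * z)) ((1:ℂ) * z) t :=
          HasDerivAt.comp_ofReal ((hasDerivAt_id ((t:ℝ):ℂ)).mul_const z)
        simp only [one_mul] at h1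
        have he : (fun t : ℝ => t • z) = fun t : ℝ => (t:ℂ) * z := by
          funext s; exact Complex.real_smul
        rw [he]; exact h1
      have hVd : HasDerivAt V (v (t • z)) (t • z) :=
        (hV _ (hseg t ht)).differentiableAt.hasDerivAt
      exact HasDerivAt.scomp t hVd hγ
    have hcont : ContinuousOn (fun t : ℝ => z • v (t • z)) (Set.uIcc (0:ℝ) 1) := by
      show ContinuousOn (z • fun t : ℝ => v (t • z)) _
      apply ContinuousOn.const_smul
      apply (hv.continuousOn).comp (Continuous.continuousOn (continuous_id.smul continuous_const))
      intro t ht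
      exact hseg t ht
    have hint : IntervalIntegrable (fun t : ℝ => z • v (t • z))
        MeasureTheory.volume 0 1 := hcont.intervalIntegrable
    have hFTC := intervalIntegral.integral_eq_sub_of_hasDerivAt hderiv hint
    simp only [one_smul, zero_smul, hV0, sub_zero] at hFTC
    have hcongr : (∫ t in (0:ℝ)..1, ((fun z => z^2 * v z) (t • z) / (t • z) ^ 2) * z)
        = ∫ t in (0:ℝ)..1, z • v (t • z) := by
      apply intervalIntegral.integral_congr_ae
      apply MeasureTheory.ae_of_all
      intro t ht
      rw [Set.uIoc_of_le zero_le_one] at ht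
      have ht0 : (t:ℝ) ≠ 0 := ne_of_gt ht.1
      have htz : t • z ≠ 0 := smul_ne_zero ht0 hz0
      have h2 : (t • z : ℂ)^2 ≠ 0 := pow_ne_zero _ htz
      show ((t • z:ℂ)^2 * v (t • z)) / (t • z)^2 * z = z • v (t • z)
      rw [mul_div_cancel_left₀ _ h2, smul_eq_mul, mul_comm]
    rw [hcongr, hFTC, hVeq z hz hz0, ha2]
    have hfz := hfne z hz hz0
    field_simp
    ring
end

section
/- If f(z) = z + a₂z² + a₃z³ + ⋯ is in the class U, then |a₂a₄ − a₃²| ≤ 1, and this bound is sharp (attained by the Koebe function k(z) = z/(1−z)²). -/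
open Metric

/-- Membership in the class `U`. -/
def IsClassU (f : ℂ → ℂ) : Prop :=
  AnalyticOn ℂ f (ball 0 1) ∧ f 0 = 0 ∧ deriv f 0 = 1 ∧
    ∀ z ∈ ball (0:ℂ) 1, z ≠ 0 → ‖(z / f z) ^ 2 * deriv f z - 1‖ < 1

/-- Taylor coefficient `aₙ = f⁽ⁿ⁾(0)/n!`. -/
noncomputable def coefA (f : ℂ → ℂ) (n : ℕ) : ℂ :=
  iteratedDeriv n f 0 / (n.factorial : ℂ)

open Filter Topology Set

section helpers
variable {s : Set ℂ} (hs : IsOpen s) (h0 : (0:ℂ) ∈ s)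
include hs h0

lemma ev_deriv {F F' : ℂ → ℂ} (hF : ∀ z ∈ s, HasDerivAt F (F' z) z) :
    deriv F =ᶠ[𝓝 (0:ℂ)] F' := by
  filter_upwards [hs.mem_nhds h0] with z hz
  exact (hF z hz).deriv

lemma itd_add : ∀ (n : ℕ) (p q : ℂ → ℂ), AnalyticOnNhd ℂ p s → AnalyticOnNhd ℂ q s →
    iteratedDeriv n (fun z => p z + q z) 0 = iteratedDeriv n p 0 + iteratedDeriv n q 0 := by
  intro n
  induction n with
  | zero => intro p q _ _; simp
  | succ n ih =>
    intro p q hp hq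
    have hev : deriv (fun z => p z + q z) =ᶠ[𝓝 (0:ℂ)]
        fun z => deriv p z + deriv q z := by
      filter_upwards [hs.mem_nhds h0] with z hz
      exact deriv_add ((hp z hz).differentiableAt) ((hq z hz).differentiableAt)
    rw [iteratedDeriv_succ', hev.iteratedDeriv_eq n,
      ih _ _ (hp.deriv_of_isOpen hs) (hq.deriv_of_isOpen hs),
      iteratedDeriv_succ', iteratedDeriv_succ']

lemma itd_sub (n : ℕ) (p q : ℂ → ℂ) (hp : AnalyticOnNhd ℂ p s) (hq : AnalyticOnNhd ℂ q s) :
    iteratedDeriv n (fun z => p z - q z) 0 = iteratedDeriv n p 0 - iteratedDeriv n q 0 := by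
  have := itd_add hs h0 n p (fun z => -q z) hp hq.neg
  simp only [sub_eq_add_neg, this]
  congr 1
  exact iteratedDeriv_neg n q 0

lemma itd_zmul : ∀ (n : ℕ) (q : ℂ → ℂ), AnalyticOnNhd ℂ q s →
    iteratedDeriv (n+1) (fun z => z * q z) 0 = (n+1 : ℂ) * iteratedDeriv n q 0 := by
  intro n
  induction n with
  | zero =>
    intro q hq
    rw [iteratedDeriv_one]
    have : HasDerivAt (fun z => z * q z) (1 * q 0 + 0 * deriv q 0) 0 :=
      (hasDerivAt_id 0).mul ((hq 0 h0).differentiableAt.hasDerivAt)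
    simp only [one_mul, zero_mul, add_zero] at this
    simp [this.deriv]
  | succ n ih =>
    intro q hq
    have hev : deriv (fun z => z * q z) =ᶠ[𝓝 (0:ℂ)]
        fun z => q z + z * deriv q z := by
      filter_upwards [hs.mem_nhds h0] with z hz
      have : HasDerivAt (fun z => z * q z) (1 * q z + z * deriv q z) z :=
        (hasDerivAt_id z).mul ((hq z hz).differentiableAt.hasDerivAt)
      simpa using this.deriv
    rw [iteratedDeriv_succ', hev.iteratedDeriv_eq (n+1),
      itd_add hs h0 (n+1) _ _ hq ((analyticOnNhd_id).mul (hq.deriv_of_isOpen hs)),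
      ih _ (hq.deriv_of_isOpen hs), ← iteratedDeriv_succ']
    push_cast
    ring

end helpers

lemma itd_const_fun : ∀ (n : ℕ) (c : ℂ), iteratedDeriv (n+1) (fun _ : ℂ => c) = fun _ => (0:ℂ) := by
  intro n
  induction n with
  | zero => intro c; rw [iteratedDeriv_one]; exact deriv_const' c
  | succ n ih =>
    intro c
    rw [iteratedDeriv_succ', deriv_const' c, ih 0]

section helpers3
variable {s : Set ℂ} (hs : IsOpen s) (h0 : (0:ℂ) ∈ s)
include hs h0

lemma ev_deriv_mul (p q : ℂ → ℂ) (hp : AnalyticOnNhd ℂ p s) (hq : AnalyticOnNhd ℂ q s) :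
    deriv (fun z => p z * q z) =ᶠ[𝓝 (0:ℂ)] fun z => deriv p z * q z + p z * deriv q z := by
  filter_upwards [hs.mem_nhds h0] with z hz
  exact deriv_mul ((hp z hz).differentiableAt) ((hq z hz).differentiableAt)

omit hs in
lemma itd_mul1 (p q : ℂ → ℂ) (hp : AnalyticOnNhd ℂ p s) (hq : AnalyticOnNhd ℂ q s) :
    iteratedDeriv 1 (fun z => p z * q z) 0 =
      iteratedDeriv 1 p 0 * q 0 + p 0 * iteratedDeriv 1 q 0 := by
  rw [iteratedDeriv_one, iteratedDeriv_one, iteratedDeriv_one]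
  exact deriv_mul ((hp 0 h0).differentiableAt) ((hq 0 h0).differentiableAt)

lemma itd_mul2 (p q : ℂ → ℂ) (hp : AnalyticOnNhd ℂ p s) (hq : AnalyticOnNhd ℂ q s) :
    iteratedDeriv 2 (fun z => p z * q z) 0 =
      iteratedDeriv 2 p 0 * q 0 + 2 * iteratedDeriv 1 p 0 * iteratedDeriv 1 q 0
        + p 0 * iteratedDeriv 2 q 0 := by
  have h2 : (2:ℕ) = 1 + 1 := rfl
  rw [h2, iteratedDeriv_succ', (ev_deriv_mul hs h0 p q hp hq).iteratedDeriv_eq 1,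
    itd_add hs h0 1 _ _ ((hp.deriv_of_isOpen hs).mul hq) (hp.mul (hq.deriv_of_isOpen hs)),
    itd_mul1 h0 _ _ (hp.deriv_of_isOpen hs) hq,
    itd_mul1 h0 _ _ hp (hq.deriv_of_isOpen hs)]
  simp only [← iteratedDeriv_succ']
  simp only [← iteratedDeriv_one]
  norm_num
  ring

lemma itd_mul3 (p q : ℂ → ℂ) (hp : AnalyticOnNhd ℂ p s) (hq : AnalyticOnNhd ℂ q s) :
    iteratedDeriv 3 (fun z => p z * q z) 0 =
      iteratedDeriv 3 p 0 * q 0 + 3 * iteratedDeriv 2 p 0 * iteratedDeriv 1 q 0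
        + 3 * iteratedDeriv 1 p 0 * iteratedDeriv 2 q 0 + p 0 * iteratedDeriv 3 q 0 := by
  have h3 : (3:ℕ) = 2 + 1 := rfl
  rw [h3, iteratedDeriv_succ', (ev_deriv_mul hs h0 p q hp hq).iteratedDeriv_eq 2,
    itd_add hs h0 2 _ _ ((hp.deriv_of_isOpen hs).mul hq) (hp.mul (hq.deriv_of_isOpen hs)),
    itd_mul2 hs h0 _ _ (hp.deriv_of_isOpen hs) hq,
    itd_mul2 hs h0 _ _ hp (hq.deriv_of_isOpen hs)]
  simp only [← iteratedDeriv_succ']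
  simp only [← iteratedDeriv_one]
  norm_num
  ring

end helpers3

lemma analyticAt_dslope_zero {F : ℂ → ℂ} (h : AnalyticAt ℂ F 0) :
    AnalyticAt ℂ (dslope F 0) 0 := by
  obtain ⟨p, hp⟩ := h
  exact hp.has_fpower_series_dslope_fslope.analyticAt

lemma mobius_bound (a b : ℂ) (ha : ‖a‖ ≤ 1) (hb : ‖b‖ ≤ 1) :
    ‖a - b‖ ≤ ‖1 - (starRingEnd ℂ) b * a‖ := by
  have e : ∀ w : ℂ, ‖w‖ ^ 2 = Complex.normSq w := fun w => by
    rw [Complex.sq_norm]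
  have h1 : Complex.normSq a ≤ 1 := by
    rw [← e]; nlinarith [norm_nonneg a]
  have h2 : Complex.normSq b ≤ 1 := by
    rw [← e]; nlinarith [norm_nonneg b]
  rw [← Real.sqrt_sq (norm_nonneg (a - b)), ← Real.sqrt_sq (norm_nonneg (1 - (starRingEnd ℂ) b * a))]
  apply Real.sqrt_le_sqrt
  rw [e, e]
  simp only [Complex.normSq_apply, Complex.sub_re, Complex.sub_im, Complex.mul_re,
    Complex.mul_im, Complex.one_re, Complex.one_im, Complex.conj_re, Complex.conj_im]
  simp only [Complex.normSq_apply] at h1 h2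
  nlinarith [mul_nonneg (sub_nonneg.2 h1) (sub_nonneg.2 h2)]

set_option maxHeartbeats 1000000 in
lemma main_bound (f : ℂ → ℂ) (hf : IsClassU f) :
    ‖coefA f 2 * coefA f 4 - (coefA f 3) ^ 2‖ ≤ 1 := by
  obtain ⟨hfa, hf0, hf'0, hU⟩ := hf
  set B : Set ℂ := ball (0:ℂ) 1 with hBdef
  have hBo : IsOpen B := isOpen_ball
  have h0B : (0:ℂ) ∈ B := mem_ball_self one_pos
  have hf_an : AnalyticOnNhd ℂ f B := (isOpen_ball.analyticOn_iff_analyticOnNhd).1 hfa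
  -- f does not vanish on the punctured ball
  have fz_ne : ∀ z ∈ B, z ≠ 0 → f z ≠ 0 := by
    intro z hz hz0 hfz
    have h1 := hU z hz hz0
    rw [hfz] at h1
    simp at h1
  -- h = f z / z
  set h : ℂ → ℂ := dslope f 0 with hhdef
  have hh0 : h 0 = 1 := by rw [hhdef, dslope_same]; exact hf'0
  have hfh : ∀ z, f z = z * h z := by
    intro z
    have := sub_smul_dslope f 0 z
    rw [hf0, sub_zero, sub_zero, smul_eq_mul] at this
    exact this.symm
  have hh_an : AnalyticOnNhd ℂ h B := by
    intro z hz
    rcases eq_or_ne z 0 with rfl | hz0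
    · exact analyticAt_dslope_zero (hf_an 0 h0B)
    · have ha : AnalyticAt ℂ (fun w => w⁻¹ * f w) z :=
        (analyticAt_id.inv hz0).mul (hf_an z hz)
      apply ha.congr
      filter_upwards [isOpen_ne.mem_nhds hz0] with w hw
      rw [hhdef, dslope_of_ne f hw, slope_def_field, hf0, sub_zero, sub_zero, div_eq_inv_mul]
  have hh_ne : ∀ z ∈ B, h z ≠ 0 := by
    intro z hz
    rcases eq_or_ne z 0 with rfl | hz0
    · rw [hh0]; exact one_ne_zero
    · intro hzero
      exact fz_ne z hz hz0 (by rw [hfh z, hzero, mul_zero])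
  -- g = z / f z
  set g : ℂ → ℂ := fun z => (h z)⁻¹ with hgdef
  have hg_an : AnalyticOnNhd ℂ g B := hh_an.inv hh_ne
  have hg0 : g 0 = 1 := by rw [hgdef]; simp [hh0]
  have hg_ne : ∀ z ∈ B, g z ≠ 0 := fun z hz => inv_ne_zero (hh_ne z hz)
  have hhg : ∀ z, h z = (g z)⁻¹ := fun z => (inv_inv (h z)).symm
  have hg'_an : AnalyticOnNhd ℂ (deriv g) B := hg_an.deriv_of_isOpen hBo
  -- ω
  set ω : ℂ → ℂ := fun z => 1 + z * deriv g z - g z with hωdef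
  have hω_an : AnalyticOnNhd ℂ ω B :=
    (analyticOnNhd_const.add (analyticOnNhd_id.mul hg'_an)).sub hg_an
  have hω0 : ω 0 = 0 := by rw [hωdef]; simp [hg0]
  have hω_eq : ∀ z ∈ B, z ≠ 0 → ω z = -((z / f z) ^ 2 * deriv f z - 1) := by
    intro z hz hz0
    have hhz := hh_ne z hz
    have hgz := hg_ne z hz
    have hdh : DifferentiableAt ℂ h z := (hh_an z hz).differentiableAt
    have hdg : DifferentiableAt ℂ g z := (hg_an z hz).differentiableAt
    -- deriv f z = h z + z * deriv h z
    have hdf : deriv f z = h z + z * deriv h z := by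
      have : f = fun w => w * h w := funext hfh
      rw [this]
      have : HasDerivAt (fun w => w * h w) (1 * h z + z * deriv h z) z :=
        (hasDerivAt_id z).mul hdh.hasDerivAt
      simpa using this.deriv
    -- deriv h z = - deriv g z / (g z)^2
    have hdh' : deriv h z = -deriv g z / (g z) ^ 2 := by
      have : h = fun w => (g w)⁻¹ := funext hhg
      rw [this]
      exact deriv_inv'' hdg hgz
    have hzf : z / f z = g z := by
      rw [hfh z, hgdef]
      field_simp
    rw [hzf, hωdef, hdf, hdh', hhg z]
    field_simp
    ring
  have hω_lt : ∀ z ∈ B, ‖ω z‖ < 1 := by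
    intro z hz
    rcases eq_or_ne z 0 with rfl | hz0
    · rw [hω0]; simp
    · rw [hω_eq z hz hz0, norm_neg]; exact hU z hz hz0
  have hω'0 : deriv ω 0 = 0 := by
    have hdg' : DifferentiableAt ℂ (deriv g) 0 := (hg'_an 0 h0B).differentiableAt
    have hdg : DifferentiableAt ℂ g 0 := (hg_an 0 h0B).differentiableAt
    have h1 : HasDerivAt ω ((0 + (1 * deriv g 0 + 0 * deriv (deriv g) 0)) - deriv g 0) 0 := by
      exact (((hasDerivAt_const (0:ℂ) (1:ℂ)).add
        ((hasDerivAt_id (0:ℂ)).mul hdg'.hasDerivAt)).sub hdg.hasDerivAt)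
    have := h1.deriv
    rw [this]
    ring
  -- ψ = ω / z²
  set ψ : ℂ → ℂ := dslope (dslope ω 0) 0 with hψdef
  have hψ_eq : ∀ z, z ^ 2 * ψ z = ω z := by
    intro z
    have h1 := sub_smul_dslope (dslope ω 0) 0 z
    have h2 := sub_smul_dslope ω 0 z
    rw [dslope_same, hω'0, sub_zero, sub_zero, smul_eq_mul] at h1
    rw [hω0, sub_zero, sub_zero, smul_eq_mul] at h2
    calc z ^ 2 * ψ z = z * (z * ψ z) := by ring
    _ = z * dslope ω 0 z := by rw [hψdef, h1]
    _ = ω z := h2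
  have hψ_an : AnalyticOnNhd ℂ ψ B := by
    intro z hz
    rcases eq_or_ne z 0 with rfl | hz0
    · exact analyticAt_dslope_zero (analyticAt_dslope_zero (hω_an 0 h0B))
    · have ha : AnalyticAt ℂ (fun w => ω w / w ^ 2) z :=
        (hω_an z hz).div (analyticAt_id.pow 2) (pow_ne_zero 2 hz0)
      apply ha.congr
      filter_upwards [isOpen_ne.mem_nhds hz0] with w hw
      rw [eq_comm, eq_div_iff (pow_ne_zero 2 hw), mul_comm, hψ_eq w]
  -- |ψ| ≤ 1 by the maximum modulus principle
  have hψ_le : ∀ z ∈ B, ‖ψ z‖ ≤ 1 := by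
    intro z hz
    have hz1 : ‖z‖ < 1 := by simpa [hBdef, dist_zero_right] using hz
    have key : ∀ r : ℝ, ‖z‖ < r → r < 1 → ‖ψ z‖ ≤ 1 / r ^ 2 := by
      intro r hr1 hr2
      have hr0 : 0 < r := lt_of_le_of_lt (norm_nonneg z) hr1
      have hsub : closedBall (0:ℂ) r ⊆ B := closedBall_subset_ball hr2
      have hdc : DiffContOnCl ℂ ψ (ball (0:ℂ) r) := by
        constructor
        · exact (hψ_an.differentiableOn).mono (ball_subset_ball hr2.le)
        · exact (hψ_an.continuousOn).mono
            (closure_ball_subset_closedBall.trans hsub)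
      apply Complex.norm_le_of_forall_mem_frontier_norm_le isBounded_ball hdc
      · intro w hw
        rw [frontier_ball (0:ℂ) hr0.ne'] at hw
        have hwn : ‖w‖ = r := by simpa [dist_zero_right] using hw
        have hw0 : w ≠ 0 := by
          intro h0; rw [h0] at hwn; simp at hwn; exact hr0.ne' hwn.symm
        have hwB : w ∈ B := by
          rw [hBdef, mem_ball, dist_zero_right, hwn]; exact hr2
        have hωw := (hω_lt w hwB).le
        rw [← hψ_eq w] at hωw
        rw [norm_mul, norm_pow, hwn] at hωw
        rw [le_div_iff₀ (by positivity)]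
        calc ‖ψ w‖ * r ^ 2 = r ^ 2 * ‖ψ w‖ := by ring
        _ ≤ 1 := hωw
      · exact subset_closure (by simpa [dist_zero_right] using hr1)
    have tend : Tendsto (fun r : ℝ => 1 / r ^ 2) (𝓝[<] (1:ℝ)) (𝓝 1) := by
      have : Tendsto (fun r : ℝ => 1 / r ^ 2) (𝓝 (1:ℝ)) (𝓝 (1 / 1 ^ 2)) := by
        apply Tendsto.div tendsto_const_nhds
        · exact (continuous_pow 2).continuousAt
        · norm_num
      simpa using this.mono_left nhdsWithin_le_nhds
    refine ge_of_tendsto tend ?_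
    filter_upwards [Ioo_mem_nhdsLT_of_mem (show (1:ℝ) ∈ Ioc ‖z‖ 1 from ⟨hz1, le_refl 1⟩)]
      with r hr
    exact key r hr.1 hr.2
  -- Schwarz--Pick at 0
  set d0 : ℂ := ψ 0 with hd0def
  set d1 : ℂ := deriv ψ 0 with hd1def
  have hd0 : ‖d0‖ ≤ 1 := hψ_le 0 h0B
  have hd1 : ‖d1‖ ≤ 1 - ‖d0‖ ^ 2 := by
    rcases eq_or_lt_of_le hd0 with heq | hlt
    · -- |ψ 0| = 1 : ψ is constant
      have hmax : IsMaxOn (norm ∘ ψ) B 0 := by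
        intro x hx
        simp only [Function.comp_apply]
        rw [← hd0def, heq]
        exact hψ_le x hx
      have hconst := Complex.eqOn_of_isPreconnected_of_isMaxOn_norm
        (convex_ball (0:ℂ) 1).isPreconnected isOpen_ball hψ_an.differentiableOn h0B hmax
      have hev : ψ =ᶠ[𝓝 (0:ℂ)] fun _ => d0 := by
        filter_upwards [hBo.mem_nhds h0B] with w hw
        exact hconst hw
      have : d1 = 0 := by rw [hd1def, hev.deriv_eq, deriv_const]
      rw [this, heq]
      simp
    · -- |ψ 0| < 1 : Möbius transform
      set φ : ℂ → ℂ := fun z => (ψ z - d0) / (1 - (starRingEnd ℂ) d0 * ψ z) with hφdef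
      have hden : ∀ z ∈ B, (1:ℂ) - (starRingEnd ℂ) d0 * ψ z ≠ 0 := by
        intro z hz hcontra
        have h1 : (1:ℂ) = (starRingEnd ℂ) d0 * ψ z := by
          rwa [sub_eq_zero] at hcontra
        have h2 : (1:ℝ) = ‖(starRingEnd ℂ) d0 * ψ z‖ := by rw [← h1]; simp
        rw [norm_mul, RCLike.norm_conj] at h2
        nlinarith [hψ_le z hz, norm_nonneg (ψ z), norm_nonneg d0]
      have hφ_an : AnalyticOnNhd ℂ φ B := by
        apply AnalyticOnNhd.div
        · exact hψ_an.sub analyticOnNhd_const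
        · exact analyticOnNhd_const.sub (analyticOnNhd_const.mul hψ_an)
        · exact hden
      have hφ0 : φ 0 = 0 := by rw [hφdef]; simp [← hd0def]
      have hφ_le : ∀ z ∈ B, ‖φ z‖ ≤ 1 := by
        intro z hz
        rw [hφdef]
        simp only
        rw [norm_div]
        have hd := hden z hz
        have hdpos : 0 < ‖(1:ℂ) - (starRingEnd ℂ) d0 * ψ z‖ := norm_pos_iff.2 hd
        rw [div_le_one hdpos]
        exact mobius_bound (ψ z) d0 (hψ_le z hz) hd0
      have hφd : ‖deriv φ 0‖ ≤ 1 := by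
        have key : ∀ ε : ℝ, 0 < ε → ‖deriv φ 0‖ ≤ 1 + ε := by
          intro ε hε
          have h1 := Complex.norm_deriv_le_div_of_mapsTo_ball
            (f := φ) (c := 0) (R₁ := 1) (R₂ := 1 + ε) hφ_an.differentiableOn ?_ one_pos
          · calc ‖deriv φ 0‖ ≤ (1 + ε) / 1 := h1
            _ = 1 + ε := by ring
          · intro z hz
            rw [mem_closedBall, hφ0, dist_zero_right]
            exact le_trans (hφ_le z hz) (by linarith)
        exact le_of_forall_pos_le_add key
      have hDval : (1:ℂ) - (starRingEnd ℂ) d0 * d0 ≠ 0 := hden 0 h0B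
      have hφ'0 : deriv φ 0 = d1 / (1 - (starRingEnd ℂ) d0 * d0) := by
        have hψd : HasDerivAt ψ d1 0 := (hψ_an 0 h0B).differentiableAt.hasDerivAt
        have hN : HasDerivAt (fun z => ψ z - d0) d1 0 := hψd.sub_const d0
        have hD : HasDerivAt (fun z => (1:ℂ) - (starRingEnd ℂ) d0 * ψ z)
            (-((starRingEnd ℂ) d0 * d1)) 0 := (hψd.const_mul ((starRingEnd ℂ) d0)).const_sub 1
        have := hN.div hD hDval
        rw [hφdef]
        rw [show (fun z => (ψ z - d0) / (1 - (starRingEnd ℂ) d0 * ψ z)) =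
          ((fun z => ψ z - d0) / fun z => 1 - (starRingEnd ℂ) d0 * ψ z) from rfl, this.deriv]
        simp only [← hd0def, sub_self, zero_mul, mul_zero]
        field_simp
        ring
      have hnorm : ‖(1:ℂ) - (starRingEnd ℂ) d0 * d0‖ = 1 - ‖d0‖ ^ 2 := by
        have : (starRingEnd ℂ) d0 * d0 = (Complex.normSq d0 : ℂ) := by
          rw [mul_comm, Complex.mul_conj]
        rw [this]
        have h2 : ((1:ℂ) - (Complex.normSq d0 : ℂ)) = ((1 - Complex.normSq d0 : ℝ) : ℂ) := by
          push_cast; ring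
        rw [h2, Complex.norm_real, Real.norm_eq_abs,
          abs_of_nonneg (by nlinarith [Complex.normSq_eq_norm_sq d0, norm_nonneg d0]),
          Complex.normSq_eq_norm_sq]
      rw [hφ'0, norm_div, hnorm, div_le_one (by nlinarith [norm_nonneg d0])] at hφd
      exact hφd
  -- χ = (g - 1)/z and the bound ‖g'(0)‖ ≤ 2
  set χ : ℂ → ℂ := dslope g 0 with hχdef
  have hχ0 : χ 0 = deriv g 0 := by rw [hχdef, dslope_same]
  have hgχ : ∀ z, g z = 1 + z * χ z := by
    intro z
    have := sub_smul_dslope g 0 z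
    rw [hg0, sub_zero, smul_eq_mul] at this
    rw [← hχdef] at this
    linear_combination -this
  have hχ_an : AnalyticOnNhd ℂ χ B := by
    intro z hz
    rcases eq_or_ne z 0 with rfl | hz0
    · exact analyticAt_dslope_zero (hg_an 0 h0B)
    · have ha : AnalyticAt ℂ (fun w => w⁻¹ * (g w - 1)) z :=
        (analyticAt_id.inv hz0).mul ((hg_an z hz).sub analyticAt_const)
      apply ha.congr
      filter_upwards [isOpen_ne.mem_nhds hz0] with w hw
      rw [hχdef, dslope_of_ne g hw, slope_def_field, hg0, sub_zero, div_eq_inv_mul]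
  have hχψ_ne : ∀ z ∈ B, z ≠ 0 → deriv χ z = ψ z := by
    intro z hz hz0
    have hev : χ =ᶠ[𝓝 z] fun w => (g w - 1) * w⁻¹ := by
      filter_upwards [isOpen_ne.mem_nhds hz0] with w hw
      rw [hχdef, dslope_of_ne g hw, slope_def_field, hg0, sub_zero, div_eq_mul_inv]
    have hder : HasDerivAt (fun w => (g w - 1) * w⁻¹)
        (deriv g z * z⁻¹ + (g z - 1) * (-(z^2)⁻¹)) z :=
      (((hg_an z hz).differentiableAt.hasDerivAt).sub_const 1).mul (hasDerivAt_inv hz0)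
    rw [hev.deriv_eq, hder.deriv]
    have hψz : ψ z = ω z / z ^ 2 := by
      rw [eq_div_iff (pow_ne_zero 2 hz0), mul_comm, hψ_eq z]
    rw [hψz, hωdef]
    field_simp
    ring
  have hχψ : ∀ z ∈ B, deriv χ z = ψ z := by
    intro z hz
    rcases eq_or_ne z 0 with rfl | hz0
    · have t1 : ContinuousAt (deriv χ) 0 :=
        (((hχ_an.deriv_of_isOpen hBo) 0 h0B).differentiableAt).continuousAt
      have t2 : ContinuousAt ψ 0 := ((hψ_an 0 h0B).differentiableAt).continuousAt
      have hpunct : deriv χ =ᶠ[𝓝[≠] (0:ℂ)] ψ := by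
        filter_upwards [self_mem_nhdsWithin,
          mem_nhdsWithin_of_mem_nhds (hBo.mem_nhds h0B)] with w hw1 hw2
        exact hχψ_ne w hw2 hw1
      have l1 : Tendsto (deriv χ) (𝓝[≠] (0:ℂ)) (𝓝 (deriv χ 0)) :=
        t1.tendsto.mono_left nhdsWithin_le_nhds
      have l2 : Tendsto (deriv χ) (𝓝[≠] (0:ℂ)) (𝓝 (ψ 0)) :=
        (t2.tendsto.mono_left nhdsWithin_le_nhds).congr' hpunct.symm
      exact tendsto_nhds_unique l1 l2
    · exact hχψ_ne z hz hz0
  have hχ_lips : ∀ x ∈ B, ∀ y ∈ B, ‖χ y - χ x‖ ≤ ‖y - x‖ := by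
    intro x hx y hy
    have := Convex.norm_image_sub_le_of_norm_deriv_le
      (f := χ) (C := 1) (fun w hw => (hχ_an w hw).differentiableAt)
      (fun w hw => by rw [hχψ w hw]; exact hψ_le w hw)
      (convex_ball (0:ℂ) 1) hx hy
    simpa using this
  set b1 : ℂ := deriv g 0 with hb1def
  have hb1 : ‖b1‖ ≤ 2 := by
    by_contra hcon
    push_neg at hcon
    set β : ℝ := ‖b1‖ with hβdef
    set r : ℝ := 2 / β with hrdef
    have hβ0 : (0:ℝ) < β := by linarith
    have hr0 : (0:ℝ) < r := by positivity
    have hr1 : r < 1 := by rw [hrdef, div_lt_one hβ0]; linarith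
    have hrβ : 2 / β < 1 := by rw [div_lt_one hβ0]; linarith
    have hβr : 1 < β - r := by rw [hrdef]; linarith
    have hsubB : closedBall (0:ℂ) r ⊆ B := closedBall_subset_ball hr1
    have hχlb : ∀ z ∈ closedBall (0:ℂ) r, β - r ≤ ‖χ z‖ := by
      intro z hz
      have hzr : ‖z‖ ≤ r := by simpa [dist_zero_right] using hz
      have h1 : ‖χ 0 - χ z‖ ≤ ‖(0:ℂ) - z‖ := hχ_lips z (hsubB hz) 0 h0B
      have h2 : ‖(0:ℂ) - z‖ = ‖z‖ := by rw [zero_sub, norm_neg]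
      have h3 : ‖χ 0‖ - ‖χ z‖ ≤ ‖χ 0 - χ z‖ := norm_sub_norm_le _ _
      have h4 : ‖χ 0‖ = β := by rw [hχ0, hβdef, hb1def]
      linarith
    have hχ_ne : ∀ z ∈ closedBall (0:ℂ) r, χ z ≠ 0 := by
      intro z hz hzero
      have := hχlb z hz
      rw [hzero, norm_zero] at this
      linarith
    set T : ℂ → ℂ := fun z => -(χ z)⁻¹ with hTdef
    have hrr : 1 ≤ r * (β - r) := by
      have hβ2 : 4 < β ^ 2 := by nlinarith
      have he : r * (β - r) = 2 - 4 / β ^ 2 := by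
        rw [hrdef]; field_simp; ring
      have : 4 / β ^ 2 < 1 := (div_lt_one (by positivity)).2 hβ2
      rw [he]; linarith
    have hinvr : (β - r)⁻¹ ≤ r := by
      rw [inv_le_comm₀ (by linarith) hr0]
      rw [inv_le_iff_one_le_mul₀ hr0]
      linarith [hrr]
    have hmaps : MapsTo T (closedBall (0:ℂ) r) (closedBall (0:ℂ) r) := by
      intro z hz
      rw [mem_closedBall, dist_zero_right, hTdef]
      simp only [norm_neg, norm_inv]
      calc ‖χ z‖⁻¹ ≤ (β - r)⁻¹ := by
            apply inv_anti₀ (by linarith) (hχlb z hz)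
      _ ≤ r := hinvr
    have hTdist : ∀ x ∈ closedBall (0:ℂ) r, ∀ y ∈ closedBall (0:ℂ) r,
        dist (T x) (T y) ≤ ((β - r) ^ 2)⁻¹ * dist x y := by
      intro x hx y hy
      have hx0 := hχ_ne x hx
      have hy0 := hχ_ne y hy
      rw [dist_eq_norm, hTdef]
      simp only
      rw [show -(χ x)⁻¹ - -(χ y)⁻¹ = (χ y)⁻¹ - (χ x)⁻¹ by ring,
        inv_sub_inv hy0 hx0, norm_div, norm_mul]
      have hlx := hχlb x hx
      have hly := hχlb y hy
      have hnum : ‖χ x - χ y‖ ≤ ‖x - y‖ := by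
        have := hχ_lips y (hsubB hy) x (hsubB hx)
        simpa using this
      have hprodpos : (0:ℝ) < ‖χ y‖ * ‖χ x‖ :=
        mul_pos (lt_of_lt_of_le (by linarith) hly) (lt_of_lt_of_le (by linarith) hlx)
      rw [dist_eq_norm, div_le_iff₀ hprodpos]
      have h1 : (β - r)^2 ≤ ‖χ y‖ * ‖χ x‖ := by nlinarith
      have h2 : (0:ℝ) < (β - r)^2 := by nlinarith
      calc ‖χ x - χ y‖ ≤ ‖x - y‖ := hnum
      _ = ((β - r)^2)⁻¹ * ‖x - y‖ * ((β - r)^2) := by field_simp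
      _ ≤ ((β - r)^2)⁻¹ * ‖x - y‖ * (‖χ y‖ * ‖χ x‖) :=
          mul_le_mul_of_nonneg_left h1 (by positivity)
    set K : NNReal := ⟨((β - r)^2)⁻¹, by positivity⟩ with hKdef
    have hK1 : K < 1 := by
      have hgt : 1 < (β - r)^2 := by nlinarith
      have : ((β - r)^2)⁻¹ < 1 := by
        rw [inv_lt_one_iff₀]; right; exact hgt
      exact_mod_cast this
    have hlips : LipschitzOnWith K T (closedBall (0:ℂ) r) :=
      LipschitzOnWith.of_dist_le_mul (fun x hx y hy => hTdist x hx y hy)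
    have hcontr : ContractingWith K (hmaps.restrict T _ _) :=
      ⟨hK1, hlips.mapsToRestrict hmaps⟩
    obtain ⟨y, hycb, hfix, -, -⟩ := hcontr.exists_fixedPoint'
      (isClosed_closedBall.isComplete) hmaps (mem_closedBall_self hr0.le) (edist_ne_top _ _)
    have hy0 : χ y ≠ 0 := hχ_ne y hycb
    have hgy : g y = 0 := by
      rw [hgχ y]
      have hyT : y = -(χ y)⁻¹ := hfix.symm
      have hyχ : y * χ y = -1 := by
        nth_rewrite 1 [hyT]
        rw [neg_mul, inv_mul_cancel₀ hy0]
      rw [hyχ]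
      ring
    exact hg_ne y (hsubB hycb) hgy
  -- coefficient computations
  have hshift : ∀ (q : ℂ → ℂ) (n : ℕ), iteratedDeriv n (deriv q) 0 = iteratedDeriv (n+1) q 0 :=
    fun q n => (congrFun (iteratedDeriv_succ' (n := n) (f := q)) 0).symm
  have hH0 : iteratedDeriv 0 h 0 = 1 := by rw [iteratedDeriv_zero]; exact hh0
  have hG0 : iteratedDeriv 0 g 0 = 1 := by rw [iteratedDeriv_zero]; exact hg0
  have hG1 : iteratedDeriv 1 g 0 = b1 := by rw [iteratedDeriv_one]
  have hgh : (fun z => g z * h z) =ᶠ[𝓝 (0:ℂ)] fun _ => (1:ℂ) := by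
    filter_upwards [hBo.mem_nhds h0B] with z hz
    exact inv_mul_cancel₀ (hh_ne z hz)
  have hP : ∀ n : ℕ, iteratedDeriv (n+1) (fun z => g z * h z) 0 = 0 := by
    intro n
    rw [hgh.iteratedDeriv_eq (n+1), itd_const_fun n 1]
  have E1 := itd_mul1 h0B g h hg_an hh_an
  have E2 := itd_mul2 hBo h0B g h hg_an hh_an
  have E3 := itd_mul3 hBo h0B g h hg_an hh_an
  rw [hP 0] at E1
  rw [hP 1] at E2
  rw [hP 2] at E3
  rw [hh0, hg0, hG1] at E1 E2 E3
  -- ω iterated derivatives, two ways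
  have hp_an : AnalyticOnNhd ℂ (fun z => 1 + z * deriv g z) B :=
    analyticOnNhd_const.add (analyticOnNhd_id.mul hg'_an)
  have hA : ∀ n : ℕ, iteratedDeriv (n+1+1) ω 0
      = ((n:ℂ)+1+1) * iteratedDeriv (n+1+1) g 0 - iteratedDeriv (n+1+1) g 0 := by
    intro n
    have t1 := itd_sub hBo h0B (n+1+1) (fun z => 1 + z * deriv g z) g hp_an hg_an
    have t2 := itd_add hBo h0B (n+1+1) (fun _ => (1:ℂ)) (fun z => z * deriv g z)
      analyticOnNhd_const (analyticOnNhd_id.mul hg'_an)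
    have t3 := itd_zmul hBo h0B (n+1) (deriv g) hg'_an
    have t4 : iteratedDeriv (n+1+1) (fun _ : ℂ => (1:ℂ)) 0 = 0 := by
      rw [itd_const_fun (n+1) 1]
    rw [hωdef]
    rw [t1, t2, t4, t3, hshift g (n+1)]
    push_cast
    ring
  have hωψ : ω = fun z => z * (z * ψ z) := by
    funext z
    rw [← hψ_eq z]
    ring
  have hzψ_an : AnalyticOnNhd ℂ (fun z => z * ψ z) B := analyticOnNhd_id.mul hψ_an
  have hB2 : iteratedDeriv 2 ω 0 = 2 * d0 := by
    rw [hωψ]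
    have t1 := itd_zmul hBo h0B 1 (fun z => z * ψ z) hzψ_an
    have t2 := itd_zmul hBo h0B 0 ψ hψ_an
    rw [iteratedDeriv_zero] at t2
    rw [show (2:ℕ) = 1 + 1 from rfl, t1, t2, ← hd0def]
    push_cast
    ring
  have hB3 : iteratedDeriv 3 ω 0 = 6 * d1 := by
    rw [hωψ]
    have t1 := itd_zmul hBo h0B 2 (fun z => z * ψ z) hzψ_an
    have t2 := itd_zmul hBo h0B 1 ψ hψ_an
    rw [iteratedDeriv_one] at t2
    rw [show (3:ℕ) = 2 + 1 from rfl, t1, t2, ← hd1def]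
    push_cast
    ring
  have eG2 : iteratedDeriv 2 g 0 = 2 * d0 := by
    have := hA 0
    norm_num at this
    linear_combination hB2 - this
  have eG3 : iteratedDeriv 3 g 0 = 3 * d1 := by
    have := hA 1
    norm_num at this
    linear_combination (hB3 - this) / 2
  have e1 : iteratedDeriv 1 h 0 = -b1 := by linear_combination -E1
  have e2 : iteratedDeriv 2 h 0 = 2 * b1^2 - 2 * d0 := by
    rw [eG2] at E2
    linear_combination -E2 - 2 * b1 * e1
  have e3 : iteratedDeriv 3 h 0 = -3 * d1 + 12 * d0 * b1 - 6 * b1^3 := by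
    rw [eG3, eG2] at E3
    linear_combination -E3 - 6 * d0 * e1 - 3 * b1 * e2
  -- pass to f
  have hfz : f = fun z => z * h z := funext hfh
  have hf2 : iteratedDeriv 2 f 0 = 2 * iteratedDeriv 1 h 0 := by
    rw [hfz]
    have := itd_zmul hBo h0B 1 h hh_an
    rw [show (2:ℕ) = 1 + 1 from rfl, this]
    push_cast; ring
  have hf3 : iteratedDeriv 3 f 0 = 3 * iteratedDeriv 2 h 0 := by
    rw [hfz]
    have := itd_zmul hBo h0B 2 h hh_an
    rw [show (3:ℕ) = 2 + 1 from rfl, this]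
    push_cast; ring
  have hf4 : iteratedDeriv 4 f 0 = 4 * iteratedDeriv 3 h 0 := by
    rw [hfz]
    have := itd_zmul hBo h0B 3 h hh_an
    rw [show (4:ℕ) = 3 + 1 from rfl, this]
    push_cast; ring
  have hval : coefA f 2 * coefA f 4 - (coefA f 3) ^ 2 = b1 * d1 / 2 - d0 ^ 2 := by
    simp only [coefA, hf2, hf3, hf4, e1, e2, e3]
    norm_num [Nat.factorial]
    ring
  rw [hval]
  have hn1 : ‖b1 * d1 / 2 - d0 ^ 2‖ ≤ ‖b1 * d1 / 2‖ + ‖d0 ^ 2‖ := norm_sub_le _ _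
  have hn2 : ‖b1 * d1 / 2‖ = ‖b1‖ * ‖d1‖ / 2 := by
    rw [norm_div, norm_mul]
    norm_num
  have hn3 : ‖d0 ^ 2‖ = ‖d0‖ ^ 2 := norm_pow d0 2
  have hmul : ‖b1‖ * ‖d1‖ ≤ 2 * (1 - ‖d0‖ ^ 2) :=
    mul_le_mul hb1 hd1 (norm_nonneg d1) (by norm_num)
  rw [hn2, hn3] at hn1
  linarith

section Koebe

noncomputable def kq2 : ℂ → ℂ := fun z => ((1 - z) ^ 2)⁻¹
noncomputable def kq3 : ℂ → ℂ := fun z => ((1 - z) ^ 3)⁻¹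
noncomputable def kq4 : ℂ → ℂ := fun z => ((1 - z) ^ 4)⁻¹
noncomputable def kq5 : ℂ → ℂ := fun z => ((1 - z) ^ 5)⁻¹

lemma oneSub_ne {z : ℂ} (hz : z ∈ ball (0:ℂ) 1) : (1:ℂ) - z ≠ 0 := by
  intro hc
  have : z = 1 := by linear_combination -hc
  rw [this] at hz
  simp at hz

lemma hasDerivAt_kq2 {z : ℂ} (hz : (1:ℂ) - z ≠ 0) : HasDerivAt kq2 (2 * kq3 z) z := by
  have h1 : HasDerivAt (fun w : ℂ => 1 - w) (-1) z := by
    simpa using (hasDerivAt_id z).const_sub 1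
  have h2 : HasDerivAt (fun w : ℂ => ((1 - w) ^ 2)⁻¹) _ z := (h1.pow 2).inv (pow_ne_zero 2 hz)
  convert h2 using 1
  · rfl
  rw [kq3, Pi.pow_apply]
  field_simp
  ring
lemma hasDerivAt_kq3 {z : ℂ} (hz : (1:ℂ) - z ≠ 0) : HasDerivAt kq3 (3 * kq4 z) z := by
  have h1 : HasDerivAt (fun w : ℂ => 1 - w) (-1) z := by
    simpa using (hasDerivAt_id z).const_sub 1
  have h2 : HasDerivAt (fun w : ℂ => ((1 - w) ^ 3)⁻¹) _ z := (h1.pow 3).inv (pow_ne_zero 3 hz)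
  convert h2 using 1
  · rfl
  rw [kq4, Pi.pow_apply]
  field_simp
  ring
lemma hasDerivAt_kq4 {z : ℂ} (hz : (1:ℂ) - z ≠ 0) : HasDerivAt kq4 (4 * kq5 z) z := by
  have h1 : HasDerivAt (fun w : ℂ => 1 - w) (-1) z := by
    simpa using (hasDerivAt_id z).const_sub 1
  have h2 : HasDerivAt (fun w : ℂ => ((1 - w) ^ 4)⁻¹) _ z := (h1.pow 4).inv (pow_ne_zero 4 hz)
  convert h2 using 1
  · rfl
  rw [kq5, Pi.pow_apply]
  field_simp
  ring

lemma koebe_eq : (fun z : ℂ => z / (1 - z) ^ 2) = fun z => z * kq2 z := by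
  funext z
  rw [kq2, div_eq_mul_inv]

lemma kq2_an : AnalyticOnNhd ℂ kq2 (ball (0:ℂ) 1) := by
  intro z hz
  exact ((analyticAt_const.sub analyticAt_id).pow 2).inv (pow_ne_zero 2 (oneSub_ne hz))

lemma deriv_kq2_ev : deriv kq2 =ᶠ[𝓝 (0:ℂ)] fun z => 2 * kq3 z :=
  ev_deriv isOpen_ball (mem_ball_self one_pos) (fun z hz => hasDerivAt_kq2 (oneSub_ne hz))
lemma deriv_kq3_ev : deriv (fun z => 2 * kq3 z) =ᶠ[𝓝 (0:ℂ)] fun z => 6 * kq4 z := by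
  have := ev_deriv (F := fun z => 2 * kq3 z) (F' := fun z => 2 * (3 * kq4 z)) isOpen_ball
    (mem_ball_self one_pos) (fun z hz => (hasDerivAt_kq3 (oneSub_ne hz)).const_mul 2)
  refine this.trans (Filter.Eventually.of_forall fun z => by ring)
lemma deriv_kq4_ev : deriv (fun z => 6 * kq4 z) =ᶠ[𝓝 (0:ℂ)] fun z => 24 * kq5 z := by
  have := ev_deriv (F := fun z => 6 * kq4 z) (F' := fun z => 6 * (4 * kq5 z)) isOpen_ball
    (mem_ball_self one_pos) (fun z hz => (hasDerivAt_kq4 (oneSub_ne hz)).const_mul 6)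
  refine this.trans (Filter.Eventually.of_forall fun z => by ring)

lemma kq2_itd1 : iteratedDeriv 1 kq2 0 = 2 := by
  rw [iteratedDeriv_one, (hasDerivAt_kq2 (by norm_num)).deriv, kq3]
  norm_num
lemma kq2_itd2 : iteratedDeriv 2 kq2 0 = 6 := by
  rw [show (2:ℕ) = 1 + 1 from rfl, iteratedDeriv_succ', deriv_kq2_ev.iteratedDeriv_eq 1,
    iteratedDeriv_one, ((hasDerivAt_kq3 (z := 0) (by norm_num)).const_mul 2).deriv, kq4]
  norm_num
lemma kq2_itd3 : iteratedDeriv 3 kq2 0 = 24 := by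
  rw [show (3:ℕ) = 1 + 1 + 1 from rfl, iteratedDeriv_succ', deriv_kq2_ev.iteratedDeriv_eq 2,
    iteratedDeriv_succ', deriv_kq3_ev.iteratedDeriv_eq 1,
    iteratedDeriv_one, ((hasDerivAt_kq4 (z := 0) (by norm_num)).const_mul 6).deriv, kq5]
  norm_num

lemma koebe_coef2 : coefA (fun z : ℂ => z / (1 - z) ^ 2) 2 = 2 := by
  rw [coefA, koebe_eq, show (2:ℕ) = 1 + 1 from rfl,
    itd_zmul isOpen_ball (mem_ball_self one_pos) 1 kq2 kq2_an, kq2_itd1]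
  norm_num [Nat.factorial]
lemma koebe_coef3 : coefA (fun z : ℂ => z / (1 - z) ^ 2) 3 = 3 := by
  rw [coefA, koebe_eq, show (3:ℕ) = 2 + 1 from rfl,
    itd_zmul isOpen_ball (mem_ball_self one_pos) 2 kq2 kq2_an, kq2_itd2]
  norm_num [Nat.factorial]
lemma koebe_coef4 : coefA (fun z : ℂ => z / (1 - z) ^ 2) 4 = 4 := by
  rw [coefA, koebe_eq, show (4:ℕ) = 3 + 1 from rfl,
    itd_zmul isOpen_ball (mem_ball_self one_pos) 3 kq2 kq2_an, kq2_itd3]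
  norm_num [Nat.factorial]

lemma koebe_isClassU : IsClassU (fun z : ℂ => z / (1 - z) ^ 2) := by
  refine ⟨?_, by norm_num, ?_, ?_⟩
  · rw [isOpen_ball.analyticOn_iff_analyticOnNhd, koebe_eq]
    exact analyticOnNhd_id.mul kq2_an
  · rw [koebe_eq]
    have h0 : HasDerivAt (fun z : ℂ => z * kq2 z) (1 * kq2 0 + 0 * (2 * kq3 0)) 0 :=
      (hasDerivAt_id 0).mul (hasDerivAt_kq2 (by norm_num))
    rw [h0.deriv, kq2]
    norm_num
  · intro z hz hz0
    have h1z : (1:ℂ) - z ≠ 0 := oneSub_ne hz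
    have hder : deriv (fun z : ℂ => z / (1 - z) ^ 2) z = kq2 z + z * (2 * kq3 z) := by
      rw [koebe_eq]
      have h0 : HasDerivAt (fun z : ℂ => z * kq2 z) (1 * kq2 z + z * (2 * kq3 z)) z :=
        (hasDerivAt_id z).mul (hasDerivAt_kq2 h1z)
      rw [h0.deriv]
      ring
    have hexpr : (z / (z / (1 - z) ^ 2)) ^ 2 * deriv (fun z : ℂ => z / (1 - z) ^ 2) z - 1
        = -z^2 := by
      rw [hder, kq2, kq3]
      field_simp
      ring
    rw [hexpr, norm_neg, norm_pow]
    have hz1 : ‖z‖ < 1 := by simpa [dist_zero_right] using hz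
    nlinarith [norm_nonneg z]

end Koebe

theorem stmt_6 :
    (∀ f : ℂ → ℂ, IsClassU f →
      ‖coefA f 2 * coefA f 4 - (coefA f 3) ^ 2‖ ≤ 1) ∧
    (IsClassU (fun z => z / (1 - z) ^ 2) ∧
      ‖coefA (fun z => z / (1 - z) ^ 2) 2 * coefA (fun z => z / (1 - z) ^ 2) 4
        - (coefA (fun z => z / (1 - z) ^ 2) 3) ^ 2‖ = 1) := by
  refine ⟨main_bound, koebe_isClassU, ?_⟩
  rw [koebe_coef2, koebe_coef3, koebe_coef4]
  norm_num
end

section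
/- The function f(z) = z/(1 − z³/2) belongs to the class U, and its third Hankel determinant satisfies H₃(1) = −1/4, so |H₃(1)| = 1/4. -/
open Metric

/-- Third Hankel determinant `H₃(1)`. -/
noncomputable def H31 (f : ℂ → ℂ) : ℂ :=
  coefA f 3 * (coefA f 2 * coefA f 4 - (coefA f 3) ^ 2)
    - coefA f 4 * (coefA f 4 - coefA f 2 * coefA f 3)
    + coefA f 5 * (coefA f 3 - (coefA f 2) ^ 2)

noncomputable def myc : ℕ → ℂ := fun n => if n % 3 = 1 then (1/2 : ℂ) ^ (n / 3) else 0

lemma denom_ne {z : ℂ} (hz : ‖z‖ < 1) : (1 : ℂ) - z ^ 3 / 2 ≠ 0 := by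
  intro h
  have : z ^ 3 / 2 = 1 := by linear_combination -h
  have := congrArg norm this
  simp only [norm_div, norm_pow, norm_one] at this
  have h2 : ‖(2:ℂ)‖ = 2 := by norm_num
  rw [h2] at this
  nlinarith [norm_nonneg z, pow_lt_one₀ (norm_nonneg z) hz (by norm_num : (3:ℕ) ≠ 0)]

lemma hasDeriv (z : ℂ) (h : (1:ℂ) - z ^ 3 / 2 ≠ 0) :
    HasDerivAt (fun z : ℂ => z / (1 - z ^ 3 / 2)) ((1 + z ^ 3) / (1 - z ^ 3 / 2) ^ 2) z := by
  have h1 : HasDerivAt (fun z : ℂ => z) 1 z := hasDerivAt_id z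
  have h2 : HasDerivAt (fun z : ℂ => (1:ℂ) - z ^ 3 / 2) (-(3 * z ^ 2 / 2)) z := by
    have := ((hasDerivAt_pow 3 z).div_const 2).const_sub 1
    exact this.congr_deriv (by norm_num)
  have := h1.div h2 h
  refine this.congr_deriv ?_
  congr 1
  ring

lemma hps : HasFPowerSeriesOnBall (fun z : ℂ => z / (1 - z ^ 3 / 2))
    (FormalMultilinearSeries.ofScalars ℂ myc) 0 1 := by
  constructor
  · apply le_trans _ (FormalMultilinearSeries.le_radius_of_bound _ 1 (r := 1) ?_)
    · norm_num
    · intro n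
      rw [FormalMultilinearSeries.ofScalars_norm]
      simp only [myc]
      split
      · simp only [norm_pow, norm_div, norm_one]
        have : ‖(2:ℂ)‖ = 2 := by norm_num
        rw [this]
        have : ((1:ℝ)/2) ^ (n/3) ≤ 1 := pow_le_one₀ (by norm_num) (by norm_num)
        simpa using this.trans (by norm_num)
      · simp
  · norm_num
  · intro y hy
    rw [EMetric.mem_ball, edist_zero_right] at hy
    have hy' : ‖y‖ < 1 := by
      have := hy
      simp only [← ofReal_norm] at this
      exact ENNReal.ofReal_lt_one.mp this
    simp only [FormalMultilinearSeries.ofScalars_apply_eq, zero_add]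
    have hinj : Function.Injective (fun k : ℕ => 3 * k + 1) := by
      intro a b h
      simp only at h
      omega
    have hsupp : ∀ n ∉ Set.range (fun k : ℕ => 3 * k + 1),
        myc n • y ^ n = 0 := by
      intro n hn
      have : n % 3 ≠ 1 := by
        intro h
        exact hn ⟨n / 3, by show 3 * (n / 3) + 1 = n; omega⟩
      simp [myc, this]
    have hg : ‖y ^ 3 / 2‖ < 1 := by
      rw [norm_div, norm_pow]
      have : ‖(2:ℂ)‖ = 2 := by norm_num
      rw [this]
      nlinarith [norm_nonneg y, pow_lt_one₀ (norm_nonneg y) hy' (by norm_num : (3:ℕ) ≠ 0)]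
    have key : HasSum ((fun n => myc n • y ^ n) ∘ (fun k : ℕ => 3 * k + 1))
        (y / (1 - y ^ 3 / 2)) := by
      have := (hasSum_geometric_of_norm_lt_one hg).mul_left y
      rw [div_eq_mul_inv]
      refine HasSum.congr_fun this ?_
      intro k
      simp only [Function.comp_apply, myc]
      rw [if_pos (by omega : (3 * k + 1) % 3 = 1), (by omega : (3 * k + 1) / 3 = k),
        smul_eq_mul, div_pow, one_pow, pow_succ, pow_mul]
      rw [div_pow]
      ring
    exact (hinj.hasSum_iff hsupp).mp key

lemma coefA_eq (n : ℕ) : coefA (fun z : ℂ => z / (1 - z ^ 3 / 2)) n = myc n := by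
  have := hps.factorial_smul (1 : ℂ) n
  rw [FormalMultilinearSeries.ofScalars_apply_eq, one_pow, smul_eq_mul, mul_one,
    ← iteratedDeriv_eq_iteratedFDeriv] at this
  rw [coefA, ← this, nsmul_eq_mul, mul_comm, mul_div_assoc,
    div_self (by exact_mod_cast n.factorial_ne_zero), mul_one]

theorem stmt_8 :
    IsClassU (fun z => z / (1 - z ^ 3 / 2)) ∧
    H31 (fun z => z / (1 - z ^ 3 / 2)) = -(1 / 4) ∧
    ‖H31 (fun z => z / (1 - z ^ 3 / 2))‖ = 1 / 4 := by
  have hH : H31 (fun z => z / (1 - z ^ 3 / 2)) = -(1 / 4) := by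
    rw [H31, coefA_eq, coefA_eq, coefA_eq, coefA_eq]
    norm_num [myc]
  refine ⟨⟨?_, by norm_num, ?_, ?_⟩, hH, by rw [hH]; norm_num⟩
  · apply AnalyticOn.div
    · exact analyticOn_id
    · exact analyticOn_const.sub (((analyticOn_id).pow 3).div analyticOn_const (by norm_num))
    · intro z hz
      exact denom_ne (by simpa using hz)
  · have := (hasDeriv 0 (by norm_num)).deriv
    rw [this]; norm_num
  · intro z hz hz0
    rw [mem_ball, dist_zero_right] at hz
    have hd := denom_ne hz
    rw [(hasDeriv z hd).deriv]
    have hfz : z / (z / (1 - z ^ 3 / 2)) = 1 - z ^ 3 / 2 := by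
      field_simp
    have h2 : ((1:ℂ) - z ^ 3 / 2) ^ 2 ≠ 0 := pow_ne_zero _ hd
    have : (z / (z / (1 - z ^ 3 / 2))) ^ 2 * ((1 + z ^ 3) / (1 - z ^ 3 / 2) ^ 2) - 1 = z ^ 3 := by
      rw [hfz, mul_div_assoc', mul_comm, mul_div_assoc, div_self h2, mul_one]
      ring
    rw [this, norm_pow]
    exact pow_lt_one₀ (norm_nonneg z) hz (by norm_num)
end

section
/- The function g(z) = −log(1−z) (principal branch, g(0)=0) is convex on the unit disk (i.e. Re[1 + z g''(z)/g'(z)] > 0 for |z|<1) but does not belong to the class U; in particular |U_g(0.99)| > 1. -/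
open Metric Complex

lemma slit_aux {z : ℂ} (hz : z ∈ ball (0:ℂ) 1) : 1 - z ∈ Complex.slitPlane := by
  left
  have h1 : |z.re| ≤ ‖z‖ := Complex.abs_re_le_norm z
  have h2 : ‖z‖ < 1 := by simpa [Complex.dist_eq] using hz
  have := abs_le.mp h1
  simp only [Complex.sub_re, Complex.one_re]
  linarith [this.2]

lemma hasDerivAt_g {z : ℂ} (hz : 1 - z ∈ Complex.slitPlane) :
    HasDerivAt (fun w => -Complex.log (1 - w)) ((1 - z)⁻¹) z := by
  have h1 : HasDerivAt (fun w : ℂ => 1 - w) (-1) z := by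
    exact (hasDerivAt_id' z).const_sub 1
  have h2 := (Complex.hasDerivAt_log hz).comp z h1
  have h3 := h2.neg
  rw [show (1 - z)⁻¹ = -((1 - z)⁻¹ * -1) by ring]; exact h3

lemma deriv_g {z : ℂ} (hz : 1 - z ∈ Complex.slitPlane) :
    deriv (fun w => -Complex.log (1 - w)) z = (1 - z)⁻¹ :=
  (hasDerivAt_g hz).deriv

lemma deriv2_g {z : ℂ} (hz : z ∈ ball (0:ℂ) 1) :
    deriv (deriv (fun w => -Complex.log (1 - w))) z = ((1 - z) ^ 2)⁻¹ := by
  have hS : IsOpen {w : ℂ | 1 - w ∈ Complex.slitPlane} :=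
    Complex.isOpen_slitPlane.preimage (by continuity)
  have hmem : z ∈ {w : ℂ | 1 - w ∈ Complex.slitPlane} := slit_aux hz
  have heq : deriv (fun w => -Complex.log (1 - w)) =ᶠ[nhds z] fun w => (1 - w)⁻¹ := by
    filter_upwards [hS.mem_nhds hmem] with w hw
    exact deriv_g hw
  rw [heq.deriv_eq]
  have hne : (1 : ℂ) - z ≠ 0 := Complex.slitPlane_ne_zero hmem
  have h1 : HasDerivAt (fun w : ℂ => 1 - w) (-1) z := by
    exact (hasDerivAt_id' z).const_sub 1
  have h2 := (hasDerivAt_inv hne).comp z h1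
  have : deriv (fun w : ℂ => (1 - w)⁻¹) z = -((1 - z) ^ 2)⁻¹ * (-1) := h2.deriv
  rw [this]; ring

theorem stmt_11 (g : ℂ → ℂ) (hg : g = fun z => -Complex.log (1 - z)) :
    (∀ z ∈ ball (0:ℂ) 1,
      0 < ((1 : ℂ) + z * deriv (deriv g) z / deriv g z).re) ∧
    ¬ (∀ z ∈ ball (0:ℂ) 1, z ≠ 0 → ‖(z / g z) ^ 2 * deriv g z - 1‖ < 1) ∧
    1 < ‖((0.99 : ℂ) / g 0.99) ^ 2 * deriv g 0.99 - 1‖ := by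
  subst hg
  have hlog7 : Real.log 100 < 7 := by
    rw [Real.log_lt_iff_lt_exp (by norm_num)]
    have h1 : (2:ℝ) ^ 7 < Real.exp 1 ^ 7 := by
      apply pow_lt_pow_left₀ _ (by norm_num)
      · norm_num
      · linarith [Real.exp_one_gt_d9]
    have h2 : Real.exp 7 = Real.exp 1 ^ 7 := by
      rw [← Real.exp_nat_mul]; norm_num
    rw [h2]; nlinarith
  have hlogpos : 0 < Real.log 100 := Real.log_pos (by norm_num)
  have hkey : 1 < ‖((0.99 : ℂ) / (fun z => -Complex.log (1 - z)) 0.99) ^ 2 *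
      deriv (fun z => -Complex.log (1 - z)) 0.99 - 1‖ := by
    have hmem : (0.99 : ℂ) ∈ ball (0:ℂ) 1 := by
      simp only [mem_ball, Complex.dist_eq, sub_zero]
      have : (0.99 : ℂ) = ((0.99 : ℝ) : ℂ) := by norm_num
      rw [this, Complex.norm_real, Real.norm_eq_abs, abs_of_pos (by norm_num)]
      norm_num
    have hd : deriv (fun z : ℂ => -Complex.log (1 - z)) 0.99 = (100 : ℂ) := by
      rw [deriv_g (slit_aux hmem)]
      norm_num
    have hval : (fun z : ℂ => -Complex.log (1 - z)) 0.99 = ((Real.log 100 : ℝ) : ℂ) := by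
      show -Complex.log (1 - 0.99) = _
      have h1 : (1 : ℂ) - 0.99 = ((0.01 : ℝ) : ℂ) := by norm_num
      rw [h1, ← Complex.ofReal_log (by norm_num)]
      have : Real.log 0.01 = -Real.log 100 := by
        rw [show (0.01:ℝ) = 100⁻¹ by norm_num, Real.log_inv]
      rw [this]; push_cast; ring
    rw [hd, hval]
    set L : ℝ := Real.log 100
    have hLne : (L : ℂ) ≠ 0 := by
      simp only [ne_eq, Complex.ofReal_eq_zero]; positivity
    have hexpr : ((0.99 : ℂ) / (L : ℂ)) ^ 2 * 100 - 1 =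
        (((0.99 / L) ^ 2 * 100 - 1 : ℝ) : ℂ) := by
      push_cast; norm_num
    rw [hexpr, Complex.norm_real, Real.norm_eq_abs]
    have hL2 : L ^ 2 < 49 := by nlinarith
    have : (1 : ℝ) < (0.99 / L) ^ 2 * 100 - 1 := by
      rw [div_pow]
      rw [lt_sub_iff_add_lt, div_mul_eq_mul_div, lt_div_iff₀ (by positivity)]
      nlinarith
    rw [abs_of_pos (by linarith)]
    exact this
  refine ⟨?_, ?_, hkey⟩
  · intro z hz
    have hslit := slit_aux hz
    have hne : (1 : ℂ) - z ≠ 0 := Complex.slitPlane_ne_zero hslit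
    rw [deriv_g hslit, deriv2_g hz]
    have : (1 : ℂ) + z * ((1 - z) ^ 2)⁻¹ / (1 - z)⁻¹ = (1 - z)⁻¹ := by
      field_simp
      ring
    rw [this, Complex.inv_re]
    apply div_pos
    · have h1 : |z.re| ≤ ‖z‖ := Complex.abs_re_le_norm z
      have h2 : ‖z‖ < 1 := by simpa [Complex.dist_eq] using hz
      have := abs_le.mp h1
      simp only [Complex.sub_re, Complex.one_re]
      linarith [this.2]
    · exact Complex.normSq_pos.mpr hne
  · intro h
    have hmem : (0.99 : ℂ) ∈ ball (0:ℂ) 1 := by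
      simp only [mem_ball, Complex.dist_eq, sub_zero]
      have : (0.99 : ℂ) = ((0.99 : ℝ) : ℂ) := by norm_num
      rw [this, Complex.norm_real, Real.norm_eq_abs, abs_of_pos (by norm_num)]
      norm_num
    have := h 0.99 hmem (by norm_num)
    linarith
end

section
/- Let α ≤ −1. If f is α-convex (i.e. f is analytic on the unit disk with f(0)=0, f'(0)=1, f(z)f'(z)/z ≠ 0, and Re[(1−α)·zf'(z)/f(z) + α·(1 + zf''(z)/f'(z))] > 0 for all |z|<1), and f is starlike (Re[zf'(z)/f(z)] > 0), then f belongs to the class U, i.e. |(z/f(z))² f'(z) − 1| < 1 on the disk. -/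
open Metric Complex Set Filter

-- L1: Re(W/(1+W)) ≥ 1/2 when |W| ≥ 1
lemma aux_re_half (W : ℂ) (h1 : 1 ≤ Complex.normSq W) (h2 : W + 1 ≠ 0) :
    (1:ℝ)/2 ≤ (W / (W + 1)).re := by
  have hns : 0 < Complex.normSq (W + 1) := by
    simpa [Complex.normSq_pos] using h2
  rw [Complex.div_re]
  rw [← add_div, le_div_iff₀ hns]
  have e1 : Complex.normSq (W+1) = W.re^2 + W.im^2 + 2*W.re + 1 := by
    simp [Complex.normSq_apply]; ring
  have e2 : Complex.normSq W = W.re^2 + W.im^2 := by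
    simp [Complex.normSq_apply]; ring
  rw [e1]
  simp only [Complex.add_re, Complex.add_im, Complex.one_re, Complex.one_im]
  nlinarith [h1, e2]

-- L2: dslope analytic
lemma aux_dslope_analytic {g : ℂ → ℂ} {s : Set ℂ} (hs : IsOpen s)
    (hg : AnalyticOnNhd ℂ g s) : AnalyticOnNhd ℂ (dslope g 0) s := by
  intro z hz
  rcases eq_or_ne z 0 with rfl | hne
  · obtain ⟨p, hp⟩ := hg 0 hz
    exact ⟨_, hp.has_fpower_series_dslope_fslope⟩
  · have h1 : AnalyticAt ℂ (fun y : ℂ => y⁻¹ * (g y - g 0)) z := by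
      exact ((analyticAt_id.inv hne)).mul ((hg z hz).sub analyticAt_const)
    apply h1.congr
    filter_upwards [isOpen_compl_singleton.mem_nhds hne] with y hy
    have hy' : y ≠ 0 := hy
    rw [dslope_of_ne _ hy', slope_def_field]
    field_simp
    ring

-- L3: derivative of normSq along a real path
lemma aux_normSq_deriv {u : ℝ → ℂ} {u' : ℂ} {t : ℝ} (hu : HasDerivAt u u' t) :
    HasDerivAt (fun s => Complex.normSq (u s)) (2 * ((starRingEnd ℂ) (u t) * u').re) t := by
  have hre : HasDerivAt (fun s => (u s).re) u'.re t :=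
    (Complex.reCLM.hasFDerivAt.comp_hasDerivAt t hu)
  have him : HasDerivAt (fun s => (u s).im) u'.im t :=
    (Complex.imCLM.hasFDerivAt.comp_hasDerivAt t hu)
  have h := (hre.fun_mul hre).fun_add (him.fun_mul him)
  have heq : (fun s => Complex.normSq (u s))
      = fun s => (u s).re * (u s).re + (u s).im * (u s).im := by
    funext s; simp [Complex.normSq_apply]
  rw [heq]
  refine h.congr_deriv ?_
  simp [Complex.mul_re, Complex.conj_re, Complex.conj_im]
  ring

set_option maxHeartbeats 2000000 in
theorem stmt_13 (α : ℝ) (hα : α ≤ -1) (f : ℂ → ℂ)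
    (hf : AnalyticOn ℂ f (ball 0 1))
    (hf0 : f 0 = 0) (hf1 : deriv f 0 = 1)
    (hne : ∀ z ∈ ball (0:ℂ) 1, z ≠ 0 → f z ≠ 0 ∧ deriv f z ≠ 0)
    (hMα : ∀ z ∈ ball (0:ℂ) 1, z ≠ 0 →
      0 < ((1 - (α:ℂ)) * (z * deriv f z / f z)
        + (α:ℂ) * (1 + z * deriv (deriv f) z / deriv f z)).re)
    (hstar : ∀ z ∈ ball (0:ℂ) 1, z ≠ 0 → 0 < (z * deriv f z / f z).re) :
    ∀ z ∈ ball (0:ℂ) 1, z ≠ 0 → ‖(z / f z) ^ 2 * deriv f z - 1‖ < 1 := by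
  have h0mem : (0:ℂ) ∈ ball (0:ℂ) 1 := by simp
  have hfN : AnalyticOnNhd ℂ f (ball 0 1) := by
    rwa [isOpen_ball.analyticOn_iff_analyticOnNhd] at hf
  set h : ℂ → ℂ := dslope f 0 with hh_def
  have hhA : AnalyticOnNhd ℂ h (ball 0 1) := aux_dslope_analytic isOpen_ball hfN
  have h0 : h 0 = 1 := by rw [hh_def, dslope_same]; exact hf1
  have hfzh : ∀ z : ℂ, f z = z * h z := by
    intro z
    rcases eq_or_ne z 0 with rfl | hz
    · simp [hf0]
    · rw [hh_def, dslope_of_ne _ hz, slope_def_field, hf0]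
      field_simp
      ring
  have hhne : ∀ z ∈ ball (0:ℂ) 1, h z ≠ 0 := by
    intro z hz
    rcases eq_or_ne z 0 with rfl | hzne
    · rw [h0]; exact one_ne_zero
    · intro hcon
      exact (hne z hz hzne).1 (by rw [hfzh z, hcon, mul_zero])
  have hh'A : AnalyticOnNhd ℂ (deriv h) (ball 0 1) := hhA.deriv
  have hfun : f = fun y => y * h y := funext hfzh
  have hderiv_f : ∀ z ∈ ball (0:ℂ) 1, deriv f z = h z + z * deriv h z := by
    intro z hz
    conv_lhs => rw [hfun]
    have := ((hasDerivAt_id' z).fun_mul ((hhA z hz).differentiableAt.hasDerivAt)).deriv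
    simpa using this
  set N : ℂ → ℂ := fun z => h z + z * deriv h z - (h z)^2 with hN_def
  have hNA : AnalyticOnNhd ℂ N (ball 0 1) := fun z hz =>
    ((hhA z hz).add ((analyticAt_id).mul (hh'A z hz))).sub ((hhA z hz).pow 2)
  have hN0 : N 0 = 0 := by simp [hN_def, h0]
  have hN'0 : deriv N 0 = 0 := by
    have hd1 : HasDerivAt h (deriv h 0) 0 := (hhA 0 h0mem).differentiableAt.hasDerivAt
    have hd2 : HasDerivAt (deriv h) (deriv (deriv h) 0) 0 :=
      (hh'A 0 h0mem).differentiableAt.hasDerivAt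
    have hdN : HasDerivAt N
        (deriv h 0 + (1 * deriv h 0 + 0 * deriv (deriv h) 0) - 2 * h 0 ^ 1 * deriv h 0) 0 :=
      (hd1.add ((hasDerivAt_id 0).mul hd2)).sub (by simpa using hd1.fun_pow 2)
    rw [hdN.deriv, h0]; ring
  set w : ℂ → ℂ := fun z => N z / (h z)^2 with hw_def
  have hwA : AnalyticOnNhd ℂ w (ball 0 1) := fun z hz =>
    (hNA z hz).div ((hhA z hz).pow 2) (pow_ne_zero 2 (hhne z hz))
  have hw0 : w 0 = 0 := by simp [hw_def, hN0]
  have hwf : ∀ z ∈ ball (0:ℂ) 1, z ≠ 0 →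
      w z = (z / f z)^2 * deriv f z - 1 := by
    intro z hz hzne
    have hb := hhne z hz
    rw [hfzh z, hderiv_f z hz]
    show (h z + z * deriv h z - h z^2) / h z^2
      = (z/(z * h z))^2 * (h z + z * deriv h z) - 1
    field_simp
  have hw1 : ∀ z ∈ ball (0:ℂ) 1, z ≠ 0 →
      w z + 1 = z^2 * deriv f z / (f z)^2 := by
    intro z hz hzne
    rw [hwf z hz hzne, div_pow]
    ring
  set V : ℂ → ℂ := fun z => dslope (dslope N 0) 0 z / (h z)^2 with hV_def
  have hVA : AnalyticOnNhd ℂ V (ball 0 1) := fun z hz =>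
    ((aux_dslope_analytic isOpen_ball (aux_dslope_analytic isOpen_ball hNA)) z hz).div
      ((hhA z hz).pow 2) (pow_ne_zero 2 (hhne z hz))
  have hwV : ∀ z ∈ ball (0:ℂ) 1, w z = z^2 * V z := by
    intro z hz
    rcases eq_or_ne z 0 with rfl | hzne
    · simp [hw0]
    · have hds0 : dslope N 0 0 = 0 := by rw [dslope_same]; exact hN'0
      have h1 : dslope N 0 z = N z / z := by
        rw [dslope_of_ne _ hzne, slope_def_field, hN0]; simp
      have h2 : dslope (dslope N 0) 0 z = N z / z^2 := by
        rw [dslope_of_ne _ hzne, slope_def_field, h1, hds0]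
        rw [sub_zero, sub_zero, div_div, sq]
      show N z / h z^2 = z^2 * (dslope (dslope N 0) 0 z / h z ^ 2)
      rw [h2]
      field_simp
  -- negation
  by_contra hcon
  push_neg at hcon
  obtain ⟨z₁, hz₁b, hz₁ne, hz₁ge⟩ := hcon
  have hz₁w : 1 ≤ ‖w z₁‖ := by rw [hwf z₁ hz₁b hz₁ne]; exact hz₁ge
  set r₁ : ℝ := ‖z₁‖ with hr₁_def
  have hr₁lt : r₁ < 1 := by simpa [hr₁_def] using hz₁b
  have hcbsub : closedBall (0:ℂ) r₁ ⊆ ball (0:ℂ) 1 := closedBall_subset_ball hr₁lt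
  -- T and minimal radius point
  set T : Set ℂ := {z | z ∈ closedBall (0:ℂ) r₁ ∧ 1 ≤ ‖w z‖} with hT_def
  have hTcpt : IsCompact T := by
    have hclosed : IsClosed T :=
      ((hwA.mono hcbsub).continuousOn.norm).preimage_isClosed_of_isClosed
        Metric.isClosed_closedBall isClosed_Ici
    exact (isCompact_closedBall (0:ℂ) r₁).of_isClosed_subset hclosed (fun z hz => hz.1)
  have hTne : T.Nonempty := ⟨z₁, by simp [hT_def, hr₁_def], hz₁w⟩
  obtain ⟨t₀, ht₀T, ht₀min'⟩ := hTcpt.exists_isMinOn hTne continuous_norm.continuousOn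
  have ht₀min : ∀ y ∈ T, ‖t₀‖ ≤ ‖y‖ := fun y hy => isMinOn_iff.mp ht₀min' y hy
  set r₀ : ℝ := ‖t₀‖ with hr₀_def
  have hr₀pos : 0 < r₀ := by
    rcases eq_or_ne t₀ 0 with rfl | hne0
    · exfalso
      have := ht₀T.2
      rw [hw0] at this
      simp at this
      linarith
    · simpa [hr₀_def, norm_pos_iff] using hne0
  have hr₀le : r₀ ≤ r₁ := by simpa [hr₀_def] using ht₀T.1
  have hr₀lt : r₀ < 1 := lt_of_le_of_lt hr₀le hr₁lt
  have hcb₀sub : closedBall (0:ℂ) r₀ ⊆ ball (0:ℂ) 1 := closedBall_subset_ball hr₀lt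
  -- max point on closedBall r₀
  obtain ⟨z₀, hz₀cb, hz₀max'⟩ := (isCompact_closedBall (0:ℂ) r₀).exists_isMaxOn
    ⟨0, by simp [hr₀pos.le]⟩ ((hwA.mono hcb₀sub).continuousOn.norm)
  have hz₀max : ∀ y ∈ closedBall (0:ℂ) r₀, ‖w y‖ ≤ ‖w z₀‖ := fun y hy => isMaxOn_iff.mp hz₀max' y hy
  set M : ℝ := ‖w z₀‖ with hM_def
  have hM1 : 1 ≤ M := by
    refine le_trans ht₀T.2 (hz₀max t₀ ?_)
    simp [hr₀_def]
  have hz₀norm : ‖z₀‖ = r₀ := by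
    have hle : ‖z₀‖ ≤ r₀ := mem_closedBall_zero_iff.mp hz₀cb
    rcases lt_or_eq_of_le hle with hlt | heq
    · exfalso
      have hz₀T : z₀ ∈ T := by
        refine ⟨mem_closedBall_zero_iff.mpr (le_trans hle hr₀le), hM1⟩
      have h5 := ht₀min z₀ hz₀T
      have h6 : r₀ ≤ ‖z₀‖ := h5
      linarith
    · exact heq
  have hz₀ne : z₀ ≠ 0 := by
    intro hcon
    rw [hcon, norm_zero] at hz₀norm
    linarith
  have hz₀b : z₀ ∈ ball (0:ℂ) 1 := hcb₀sub hz₀cb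
  have hMsq : Complex.normSq (w z₀) = M^2 := by
    rw [hM_def, ← Complex.sq_norm]
  have hMsqpos : 0 < Complex.normSq (w z₀) := by rw [hMsq]; positivity
  -- Schwarz-type bound via max modulus principle on V
  have hVbd : ∀ y ∈ closedBall (0:ℂ) r₀, ‖V y‖ ≤ M / r₀^2 := by
    intro y hy
    have hd : DiffContOnCl ℂ V (ball 0 r₀) := by
      constructor
      · exact (hVA.mono (ball_subset_ball hr₀lt.le)).differentiableOn
      · rw [closure_ball (0:ℂ) hr₀pos.ne']
        exact (hVA.mono hcb₀sub).continuousOn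
    apply Complex.norm_le_of_forall_mem_frontier_norm_le isBounded_ball hd
    · intro x hx
      rw [frontier_ball (0:ℂ) hr₀pos.ne'] at hx
      have hxn : ‖x‖ = r₀ := by simpa using hx
      have hxb : x ∈ closedBall (0:ℂ) r₀ := mem_closedBall_zero_iff.mpr hxn.le
      have hxball : x ∈ ball (0:ℂ) 1 := hcb₀sub hxb
      have hxne : x ≠ 0 := by
        intro hc; rw [hc, norm_zero] at hxn; linarith
      have hVx : V x = w x / x^2 := by
        rw [hwV x hxball]
        field_simp
      rw [hVx, norm_div, norm_pow, hxn]
      gcongr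
      exact hz₀max x hxb
    · rwa [closure_ball (0:ℂ) hr₀pos.ne']
  have hwbd : ∀ t : ℝ, 0 ≤ t → t ≤ 1 → ‖w ((t:ℂ) * z₀)‖ ≤ M * t^2 := by
    intro t ht0 ht1
    have hnorm : ‖((t:ℂ) * z₀)‖ = t * r₀ := by
      rw [norm_mul, Complex.norm_real, Real.norm_of_nonneg ht0, hz₀norm]
    have hmem : (t:ℂ) * z₀ ∈ closedBall (0:ℂ) r₀ := by
      rw [mem_closedBall_zero_iff, hnorm]
      nlinarith
    have hball : (t:ℂ) * z₀ ∈ ball (0:ℂ) 1 := hcb₀sub hmem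
    have hVle := hVbd _ hmem
    calc ‖w ((t:ℂ) * z₀)‖ = ‖((t:ℂ) * z₀)^2‖ * ‖V ((t:ℂ) * z₀)‖ := by
          rw [hwV _ hball, norm_mul]
      _ ≤ (t * r₀)^2 * (M / r₀^2) := by
          rw [norm_pow, hnorm]
          exact mul_le_mul_of_nonneg_left hVle (by positivity)
      _ = M * t^2 := by
          field_simp
  -- derivative data
  have hwz₀deriv : HasDerivAt w (deriv w z₀) z₀ :=
    ((hwA z₀ hz₀b).differentiableAt).hasDerivAt
  set C : ℂ := (starRingEnd ℂ) (w z₀) * deriv w z₀ * z₀ with hC_def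
  have hCim : C.im = 0 := by
    have hinner : HasDerivAt (fun s : ℂ => Complex.exp (s * Complex.I) * z₀)
        (Complex.I * z₀) 0 := by
      have h1 : HasDerivAt (fun s : ℂ => s * Complex.I) Complex.I 0 := by
        simpa using (hasDerivAt_id (0:ℂ)).mul_const Complex.I
      have h2 := h1.cexp.mul_const z₀
      simpa using h2
    have hw' : HasDerivAt w (deriv w z₀) (Complex.exp ((0:ℂ) * Complex.I) * z₀) := by
      simpa using hwz₀deriv
    have hcomp : HasDerivAt (fun s : ℂ => w (Complex.exp (s * Complex.I) * z₀))
        (deriv w z₀ * (Complex.I * z₀)) 0 := by have := hw'.comp 0 hinner; exact this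
    have hR : HasDerivAt (fun θ : ℝ => w (Complex.exp ((θ:ℂ) * Complex.I) * z₀))
        (deriv w z₀ * (Complex.I * z₀)) 0 := by
      have := hcomp.comp_ofReal (z := 0)
      simpa using this
    have hF := aux_normSq_deriv hR
    have hmax : IsLocalMax
        (fun θ : ℝ => Complex.normSq (w (Complex.exp ((θ:ℂ) * Complex.I) * z₀))) 0 := by
      apply Filter.Eventually.of_forall
      intro θ
      have hmem : Complex.exp ((θ:ℂ) * Complex.I) * z₀ ∈ closedBall (0:ℂ) r₀ := by
        rw [mem_closedBall_zero_iff, norm_mul]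
        have : ‖Complex.exp ((θ:ℂ) * Complex.I)‖ = 1 := by
          rw [Complex.norm_exp]
          simp
        rw [this, one_mul, hz₀norm]
      have hle := hz₀max _ hmem
      show Complex.normSq (w (Complex.exp ((θ:ℂ) * Complex.I) * z₀))
        ≤ Complex.normSq (w (Complex.exp (((0:ℝ):ℂ) * Complex.I) * z₀))
      have h00 : Complex.exp (((0:ℝ):ℂ) * Complex.I) * z₀ = z₀ := by simp
      rw [h00, ← Complex.sq_norm, ← Complex.sq_norm]
      exact pow_le_pow_left₀ (norm_nonneg _) hle 2
    have hd0 := hmax.deriv_eq_zero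
    rw [hF.deriv] at hd0
    have h00 : Complex.exp (((0:ℝ):ℂ) * Complex.I) * z₀ = z₀ := by simp
    rw [h00] at hd0
    have e3 : (starRingEnd ℂ) (w z₀) * (deriv w z₀ * (Complex.I * z₀)) = C * Complex.I := by
      rw [hC_def]; ring
    rw [e3, Complex.mul_I_re] at hd0
    linarith
  have hCre : 2 * Complex.normSq (w z₀) ≤ C.re := by
    have h1 : HasDerivAt (fun s : ℂ => s * z₀) z₀ 1 := by
      simpa using (hasDerivAt_id (1:ℂ)).mul_const z₀
    have hw' : HasDerivAt w (deriv w z₀) ((1:ℂ) * z₀) := by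
      rw [one_mul]; exact hwz₀deriv
    have hinner : HasDerivAt (fun s : ℂ => w (s * z₀)) (deriv w z₀ * z₀) 1 :=
      by have := hw'.comp 1 h1; exact this
    have hR : HasDerivAt (fun t : ℝ => w ((t:ℂ) * z₀)) (deriv w z₀ * z₀) 1 := by
      have := hinner.comp_ofReal (z := 1)
      simpa using this
    have hg := aux_normSq_deriv hR
    have hg' : HasDerivAt (fun t : ℝ => Complex.normSq (w ((t:ℂ) * z₀))) (2 * C.re) 1 := by
      convert hg using 2
      rw [hC_def]
      norm_num
      ring_nf
    have hslope : Filter.Tendsto (slope (fun t : ℝ => Complex.normSq (w ((t:ℂ) * z₀))) 1)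
        (nhdsWithin 1 (Set.Iio 1)) (nhds (2 * C.re)) :=
      (hasDerivAt_iff_tendsto_slope.mp hg').mono_left
        (nhdsWithin_mono 1 (fun x hx => ne_of_lt hx))
    have hlb : Filter.Tendsto (fun t : ℝ => Complex.normSq (w z₀) * (1 + t + t^2 + t^3))
        (nhdsWithin 1 (Set.Iio 1)) (nhds (Complex.normSq (w z₀) * 4)) := by
      have hc : Continuous fun t : ℝ => Complex.normSq (w z₀) * (1 + t + t^2 + t^3) := by
        fun_prop
      have h4 := (hc.tendsto 1).mono_left (nhdsWithin_le_nhds (s := Set.Iio (1:ℝ)))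
      norm_num at h4
      convert h4 using 2
    have hev : ∀ᶠ t in nhdsWithin (1:ℝ) (Set.Iio 1),
        Complex.normSq (w z₀) * (1 + t + t^2 + t^3)
          ≤ slope (fun t : ℝ => Complex.normSq (w ((t:ℂ) * z₀))) 1 t := by
      filter_upwards [Ioo_mem_nhdsLT_of_mem (show (1:ℝ) ∈ Set.Ioc 0 1 by norm_num)] with t ht
      have ht0 : (0:ℝ) < t := ht.1
      have ht1 : t < 1 := ht.2
      have hb := hwbd t ht0.le ht1.le
      have hgt : Complex.normSq (w ((t:ℂ) * z₀)) ≤ Complex.normSq (w z₀) * t^4 := by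
        calc Complex.normSq (w ((t:ℂ) * z₀)) = ‖w ((t:ℂ) * z₀)‖^2 := by
              rw [← Complex.sq_norm]
          _ ≤ (M * t^2)^2 := by
              apply pow_le_pow_left₀ (norm_nonneg _) hb
          _ = Complex.normSq (w z₀) * t^4 := by rw [hMsq]; ring
      have hg1 : Complex.normSq (w (((1:ℝ):ℂ) * z₀)) = Complex.normSq (w z₀) := by norm_num
      rw [slope_def_field]
      have hlt : (0:ℝ) < 1 - t := by linarith
      rw [show (Complex.normSq (w ((t:ℂ) * z₀)) - Complex.normSq (w (((1:ℝ):ℂ) * z₀))) / (t - 1)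
          = (Complex.normSq (w (((1:ℝ):ℂ) * z₀)) - Complex.normSq (w ((t:ℂ) * z₀))) / (1 - t) by
        rw [← neg_sub, ← neg_sub (1:ℝ) t, neg_div_neg_eq]]
      rw [le_div_iff₀ hlt]
      rw [hg1]
      nlinarith [hgt]
    have hfin := le_of_tendsto_of_tendsto hlb hslope hev
    linarith
  set c : ℝ := C.re / Complex.normSq (w z₀) with hc_def
  have hc2 : 2 ≤ c := by
    rw [hc_def, le_div_iff₀ hMsqpos]; linarith [hCre]
  have hkey : z₀ * deriv w z₀ = (c:ℂ) * w z₀ := by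
    have hNSne : (Complex.normSq (w z₀) : ℂ) ≠ 0 := Complex.ofReal_ne_zero.mpr hMsqpos.ne'
    have hCC : ((C.re : ℝ) : ℂ) = C := by
      apply Complex.ext <;> simp [hCim]
    have hconj : (starRingEnd ℂ) (w z₀) * w z₀ = (Complex.normSq (w z₀) : ℂ) := by
      rw [mul_comm, Complex.mul_conj]
    have e1 : (Complex.normSq (w z₀) : ℂ) * (z₀ * deriv w z₀) = C * w z₀ := by
      rw [← hconj, hC_def]; ring
    have e2 : (c:ℂ) = C / (Complex.normSq (w z₀) : ℂ) := by
      rw [hc_def, Complex.ofReal_div, hCC]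
    rw [e2, div_mul_eq_mul_div, ← e1, mul_div_cancel_left₀ _ hNSne]
  -- identity with f at z₀
  have hfz₀ := (hne z₀ hz₀b hz₀ne).1
  have hf'z₀ := (hne z₀ hz₀b hz₀ne).2
  have hD : z₀ * deriv w z₀ =
      (w z₀ + 1) * ((1 + z₀ * deriv (deriv f) z₀ / deriv f z₀) + 1
        - 2 * (z₀ * deriv f z₀ / f z₀)) := by
    have hw_loc : ∀ᶠ y in nhds z₀, w y = y^2 * deriv f y / (f y)^2 - 1 := by
      have hopen : IsOpen (ball (0:ℂ) 1 ∩ {(0:ℂ)}ᶜ) :=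
        isOpen_ball.inter isOpen_compl_singleton
      filter_upwards [hopen.mem_nhds ⟨hz₀b, hz₀ne⟩] with y hy
      rw [hwf y hy.1 hy.2, div_pow]; ring
    have hderiv_eq : deriv w z₀ = deriv (fun y => y^2 * deriv f y / (f y)^2 - 1) z₀ :=
      Filter.EventuallyEq.deriv_eq (by filter_upwards [hw_loc] with y hy using hy)
    have hfd : HasDerivAt f (deriv f z₀) z₀ := (hfN z₀ hz₀b).differentiableAt.hasDerivAt
    have hf'd : HasDerivAt (deriv f) (deriv (deriv f) z₀) z₀ :=
      (hfN.deriv z₀ hz₀b).differentiableAt.hasDerivAt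
    have hnum : HasDerivAt (fun y => y^2 * deriv f y)
        (2 * z₀ * deriv f z₀ + z₀^2 * deriv (deriv f) z₀) z₀ := by
      have := (hasDerivAt_pow 2 z₀).fun_mul hf'd
      simpa using this
    have hden : HasDerivAt (fun y => (f y)^2) (2 * f z₀ * deriv f z₀) z₀ := by
      simpa using hfd.fun_pow 2
    have hq := hnum.div hden (pow_ne_zero 2 hfz₀)
    have hwd : deriv w z₀ = ((2 * z₀ * deriv f z₀ + z₀^2 * deriv (deriv f) z₀) * (f z₀)^2
        - z₀^2 * deriv f z₀ * (2 * f z₀ * deriv f z₀)) / ((f z₀)^2)^2 := by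
      rw [hderiv_eq]
      exact HasDerivAt.deriv (hq.sub_const 1)
    rw [hwd, hwf z₀ hz₀b hz₀ne]
    field_simp
    ring
  -- final algebra
  have hw1z₀ : w z₀ + 1 ≠ 0 := by
    rw [hw1 z₀ hz₀b hz₀ne]
    exact div_ne_zero (mul_ne_zero (pow_ne_zero 2 hz₀ne) hf'z₀) (pow_ne_zero 2 hfz₀)
  have hBval : (1:ℂ) + z₀ * deriv (deriv f) z₀ / deriv f z₀
      = (c:ℂ) * (w z₀ / (w z₀ + 1)) - 1 + 2 * (z₀ * deriv f z₀ / f z₀) := by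
    have e : (c:ℂ) * w z₀ = (w z₀ + 1) * ((1 + z₀ * deriv (deriv f) z₀ / deriv f z₀) + 1
        - 2 * (z₀ * deriv f z₀ / f z₀)) := by rw [← hkey]; exact hD
    have e2 : (c:ℂ) * (w z₀ / (w z₀ + 1)) = (1 + z₀ * deriv (deriv f) z₀ / deriv f z₀) + 1
        - 2 * (z₀ * deriv f z₀ / f z₀) := by
      rw [← mul_div_assoc, e, mul_div_cancel_left₀ _ hw1z₀]
    rw [e2]; ring
  have hRe := hMα z₀ hz₀b hz₀ne
  rw [hBval] at hRe
  have hstar₀ := hstar z₀ hz₀b hz₀ne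
  set P : ℂ := z₀ * deriv f z₀ / f z₀
  have hreW : (1:ℝ)/2 ≤ (w z₀ / (w z₀ + 1)).re := by
    apply aux_re_half _ (by rw [hMsq]; nlinarith) hw1z₀
  -- expand the real part and contradict
  have hexp : ((1 - (α:ℂ)) * P + (α:ℂ) * ((c:ℂ) * (w z₀ / (w z₀ + 1)) - 1 + 2 * P)).re
      = (1 + α) * P.re + α * c * (w z₀ / (w z₀ + 1)).re - α := by
    simp [Complex.add_re, Complex.mul_re, Complex.sub_re, Complex.ofReal_re,
      Complex.ofReal_im, Complex.one_re, Complex.one_im]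
    ring
  rw [hexp] at hRe
  have hα0 : α ≤ 0 := by linarith
  have h1 : (1 + α) * P.re ≤ 0 :=
    mul_nonpos_of_nonpos_of_nonneg (by linarith) hstar₀.le
  have h3 : α * c ≤ α * 2 := mul_le_mul_of_nonpos_left hc2 hα0
  have hαc0 : α * c ≤ 0 := mul_nonpos_of_nonpos_of_nonneg hα0 (by linarith)
  have h4 : α * c * (w z₀ / (w z₀ + 1)).re ≤ α * c * (1/2) :=
    mul_le_mul_of_nonpos_left hreW hαc0
  linarith [hRe, h1, h3, h4]
end

section
/- For each α with 0 ≤ α ≤ 1, the class M_α of α-convex functions is not contained in the class U; specifically, g(z) = −log(1−z) lies in M_α for all 0 ≤ α ≤ 1 but not in U. -/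
open Metric intervalIntegral

lemma re_exp_ratio_pos (w : ℂ) (hw : w ≠ 0) (him : |w.im| < Real.pi / 2) :
    0 < ((Complex.exp w - 1) / w).re := by
  have hcont : Continuous fun t : ℝ => Complex.exp (t * w) := by continuity
  have hint : ∀ t : ℝ, HasDerivAt (fun s : ℝ => Complex.exp (s * w))
      (w * Complex.exp (t * w)) t := by
    intro t
    have h1 : HasDerivAt (fun s : ℂ => Complex.exp (s * w))
        (Complex.exp ((t:ℂ) * w) * w) (t : ℂ) := (hasDerivAt_mul_const w).cexp
    simpa [mul_comm] using h1.comp_ofReal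
  have hI : Complex.exp w - 1 = ∫ t in (0:ℝ)..1, w * Complex.exp (t * w) := by
    rw [intervalIntegral.integral_eq_sub_of_hasDerivAt (fun t _ => hint t)
      ((hcont.const_smul w).intervalIntegrable (μ := MeasureTheory.volume) 0 1)]
    simp
  have hI2 : (Complex.exp w - 1) / w = ∫ t in (0:ℝ)..1, Complex.exp (t * w) := by
    rw [hI, intervalIntegral.integral_const_mul, mul_div_cancel_left₀ _ hw]
  rw [hI2]
  have hre : (∫ t in (0:ℝ)..1, Complex.exp (t * w)).re
      = ∫ t in (0:ℝ)..1, (Complex.exp (t * w)).re := by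
    have := (Complex.reCLM).intervalIntegral_comp_comm
      (hcont.intervalIntegrable (μ := MeasureTheory.volume) (0:ℝ) 1)
    simpa using this.symm
  rw [hre]
  apply intervalIntegral_pos_of_pos_on
  · exact ((Complex.continuous_re.comp hcont)).intervalIntegrable (μ := MeasureTheory.volume) 0 1
  · intro t ht
    have h1 : ((t:ℂ) * w).re = t * w.re := by simp
    have h2 : ((t:ℂ) * w).im = t * w.im := by simp
    rw [Complex.exp_re, h1, h2]
    apply mul_pos (Real.exp_pos _)
    apply Real.cos_pos_of_mem_Ioo
    constructor
    · nlinarith [abs_lt.1 him, ht.1, ht.2, abs_nonneg w.im, le_abs_self w.im, neg_abs_le w.im]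
    · nlinarith [abs_lt.1 him, ht.1, ht.2, le_abs_self w.im, neg_abs_le w.im]
  · norm_num

lemma log100_lt_5 : Real.log 100 < 5 := by
  rw [Real.log_lt_iff_lt_exp (by norm_num)]
  have h : Real.exp 5 = (Real.exp 1) ^ (5:ℕ) := by
    rw [← Real.exp_nat_mul]; norm_num
  have h2 : (2.7182818283:ℝ) ^ (5:ℕ) < (Real.exp 1) ^ (5:ℕ) :=
    pow_lt_pow_left₀ Real.exp_one_gt_d9 (by norm_num) (by norm_num)
  calc (100:ℝ) < 2.7182818283 ^ (5:ℕ) := by norm_num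
    _ < (Real.exp 1) ^ (5:ℕ) := h2
    _ = Real.exp 5 := h.symm

theorem stmt_14 (α : ℝ) (hα0 : 0 ≤ α) (hα1 : α ≤ 1)
    (g : ℂ → ℂ) (hg : g = fun z => -Complex.log (1 - z)) :
    (AnalyticOn ℂ g (ball 0 1) ∧ g 0 = 0 ∧ deriv g 0 = 1 ∧
      (∀ z ∈ ball (0:ℂ) 1, z ≠ 0 → g z ≠ 0 ∧ deriv g z ≠ 0) ∧
      ∀ z ∈ ball (0:ℂ) 1, z ≠ 0 →
        0 < ((1 - (α:ℂ)) * (z * deriv g z / g z)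
          + (α:ℂ) * (1 + z * deriv (deriv g) z / deriv g z)).re) ∧
    ¬ (∀ z ∈ ball (0:ℂ) 1, z ≠ 0 → ‖(z / g z) ^ 2 * deriv g z - 1‖ < 1) := by
  subst hg
  set g : ℂ → ℂ := fun z => -Complex.log (1 - z) with hgdef
  -- basic facts about points in the ball
  have hre : ∀ z ∈ ball (0:ℂ) 1, 0 < (1 - z).re := by
    intro z hz
    rw [mem_ball_zero_iff] at hz
    have := (Complex.abs_re_le_norm z)
    have : |z.re| < 1 := lt_of_le_of_lt this hz
    simp only [Complex.sub_re, Complex.one_re]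
    nlinarith [abs_lt.1 this]
  have hne : ∀ z ∈ ball (0:ℂ) 1, (1 : ℂ) - z ≠ 0 := by
    intro z hz h
    have := hre z hz
    rw [h] at this; simp at this
  have hslit : ∀ z ∈ ball (0:ℂ) 1, (1 - z) ∈ Complex.slitPlane := by
    intro z hz
    exact Complex.mem_slitPlane_iff.2 (Or.inl (hre z hz))
  -- derivative of g
  have hd : ∀ z ∈ ball (0:ℂ) 1, HasDerivAt g (1 - z)⁻¹ z := by
    intro z hz
    have hlog : HasDerivAt Complex.log (1 - z)⁻¹ (1 - z) :=
      Complex.hasDerivAt_log (hslit z hz)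
    have hsub : HasDerivAt (fun w : ℂ => 1 - w) (-1) z := by
      simpa using (hasDerivAt_id z).const_sub (1:ℂ)
    have := (hlog.comp z hsub).neg
    rw [show -((1 - z)⁻¹ * -1) = (1 - z)⁻¹ by ring] at this
    exact this
  have hderiv : ∀ z ∈ ball (0:ℂ) 1, deriv g z = (1 - z)⁻¹ := fun z hz => (hd z hz).deriv
  have hderiv2 : ∀ z ∈ ball (0:ℂ) 1, deriv (deriv g) z = ((1 - z) ^ 2)⁻¹ := by
    intro z hz
    have heq : deriv g =ᶠ[nhds z] fun w => (1 - w)⁻¹ := by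
      filter_upwards [isOpen_ball.mem_nhds hz] with w hw using hderiv w hw
    rw [heq.deriv_eq]
    have hsub : HasDerivAt (fun w : ℂ => 1 - w) (-1) z := by
      simpa using (hasDerivAt_id z).const_sub (1:ℂ)
    have := hsub.inv (hne z hz)
    rw [show (fun w : ℂ => (1 - w)⁻¹) = (fun w : ℂ => 1 - w)⁻¹ from rfl, this.deriv]
    field_simp
  have hg0 : g 0 = 0 := by simp [hgdef, Complex.log_one]
  have hgne : ∀ z ∈ ball (0:ℂ) 1, z ≠ 0 → g z ≠ 0 := by
    intro z hz hz0 h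
    simp only [hgdef, neg_eq_zero] at h
    have : (1:ℂ) - z = Complex.exp (Complex.log (1 - z)) := (Complex.exp_log (hne z hz)).symm
    rw [h, Complex.exp_zero] at this
    apply hz0
    linear_combination -this
  refine ⟨⟨?_, hg0, ?_, ?_, ?_⟩, ?_⟩
  · -- analyticity
    intro z hz
    exact (((analyticAt_clog (hslit z hz)).comp
      ((analyticAt_const.sub (analyticAt_id)))).neg).analyticWithinAt
  · rw [hderiv 0 (by simp)]; simp
  · intro z hz hz0
    refine ⟨hgne z hz hz0, ?_⟩
    rw [hderiv z hz]
    exact inv_ne_zero (hne z hz)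
  · -- the positivity condition
    intro z hz hz0
    rw [hderiv z hz, hderiv2 z hz]
    set w : ℂ := g z with hw
    have hwne : w ≠ 0 := hgne z hz hz0
    have hexp : Complex.exp w = (1 - z)⁻¹ := by
      rw [hw, hgdef]
      simp only [Complex.exp_neg, Complex.exp_log (hne z hz)]
    have hA : z * (1 - z)⁻¹ / w = (Complex.exp w - 1) / w := by
      rw [hexp]
      congr 1
      field_simp [hne z hz]
      ring
    have hAim : |w.im| < Real.pi / 2 := by
      have : w.im = -(Complex.log (1 - z)).im := by rw [hw, hgdef]; simp
      rw [this, abs_neg, Complex.log_im]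
      exact Complex.abs_arg_lt_pi_div_two_iff.2 (Or.inl (hre z hz))
    have hApos : 0 < (z * (1 - z)⁻¹ / w).re := by
      rw [hA]; exact re_exp_ratio_pos w hwne hAim
    have hB : (1 : ℂ) + z * ((1 - z) ^ 2)⁻¹ / (1 - z)⁻¹ = (1 - z)⁻¹ := by
      field_simp [hne z hz]
      ring
    have hBpos : 0 < ((1:ℂ) + z * ((1 - z) ^ 2)⁻¹ / (1 - z)⁻¹).re := by
      rw [hB, Complex.inv_re]
      exact div_pos (hre z hz) (Complex.normSq_pos.2 (hne z hz))
    have hexpand : ((1 - (α:ℂ)) * (z * (1 - z)⁻¹ / w)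
        + (α:ℂ) * (1 + z * ((1 - z) ^ 2)⁻¹ / (1 - z)⁻¹)).re
        = (1 - α) * (z * (1 - z)⁻¹ / w).re
          + α * ((1:ℂ) + z * ((1 - z) ^ 2)⁻¹ / (1 - z)⁻¹).re := by
      simp [Complex.add_re, Complex.mul_re, Complex.sub_re, Complex.sub_im,
        Complex.one_re, Complex.one_im, Complex.ofReal_re, Complex.ofReal_im]
    rw [hexpand]
    rcases lt_or_ge α 1 with h1 | h1
    · have := mul_pos (by linarith : (0:ℝ) < 1 - α) hApos
      nlinarith [mul_nonneg hα0 hBpos.le]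
    · have hα : α = 1 := le_antisymm hα1 h1
      subst hα
      simpa using hBpos
  · -- not in U
    intro h
    set z : ℂ := (99/100 : ℂ) with hz
    have hzb : z ∈ ball (0:ℂ) 1 := by
      rw [mem_ball_zero_iff, hz]
      have : (99/100 : ℂ) = ((99/100 : ℝ) : ℂ) := by norm_num
      rw [this, Complex.norm_real]
      norm_num
    have hz0 : z ≠ 0 := by rw [hz]; norm_num
    have h1z : (1:ℂ) - z = ((1/100 : ℝ) : ℂ) := by rw [hz]; norm_num
    set L : ℝ := Real.log 100 with hL
    have hLpos : 0 < L := Real.log_pos (by norm_num)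
    have hL5 : L < 5 := log100_lt_5
    have hgz : g z = ((L : ℝ) : ℂ) := by
      rw [hgdef]
      simp only
      rw [h1z, ← Complex.ofReal_log (by norm_num : (0:ℝ) ≤ 1/100)]
      rw [show (1/100 : ℝ) = (100:ℝ)⁻¹ by norm_num, Real.log_inv]
      push_cast
      ring
    have hdz : deriv g z = 100 := by
      rw [hderiv z hzb, h1z]
      norm_num
    have hval : (z / g z) ^ 2 * deriv g z - 1
        = (((99/100 / L) ^ 2 * 100 - 1 : ℝ) : ℂ) := by
      rw [hgz, hdz, hz]
      push_cast
      ring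
    have hLn : L ≠ 0 := ne_of_gt hLpos
    have hrge : (1:ℝ) ≤ (99/100 / L) ^ 2 * 100 - 1 := by
      rw [div_pow, le_sub_iff_add_le, div_mul_eq_mul_div, le_div_iff₀ (by positivity)]
      nlinarith
    have := h z hzb hz0
    rw [hval, Complex.norm_real] at this
    have : |(99/100 / L) ^ 2 * 100 - 1| < 1 := this
    nlinarith [le_abs_self ((99/100 / L) ^ 2 * 100 - 1)]
end

section
/- Let f ∈ U with a₂ = f''(0)/2 ≠ 0, and define g(z) = (z/f(z) − 1)/(−a₂). Then |z g'(z)/g(z) − 1| < 1 for all 0 < |z| < |a₂|/2; in particular g is starlike in the disk |z| < |a₂|/2. -/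
open Metric

theorem stmt_16 (f : ℂ → ℂ)
    (hf : AnalyticOn ℂ f (ball 0 1))
    (hf0 : f 0 = 0) (hf1 : deriv f 0 = 1)
    (hU : ∀ z ∈ ball (0:ℂ) 1, z ≠ 0 → ‖(z / f z) ^ 2 * deriv f z - 1‖ < 1)
    (a₂ : ℂ) (ha₂ : a₂ = iteratedDeriv 2 f 0 / 2) (ha₂0 : a₂ ≠ 0)
    (g : ℂ → ℂ) (hg : g = fun z => (z / f z - 1) / (-a₂)) :
    ∀ z : ℂ, 0 < ‖z‖ → ‖z‖ < ‖a₂‖ / 2 →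
      ‖z * deriv g z / g z - 1‖ < 1 := by
  have h01 : (0:ℂ) ∈ ball (0:ℂ) 1 := by simp
  have hbmem : ball (0:ℂ) 1 ∈ nhds (0:ℂ) := ball_mem_nhds _ one_pos
  have hfd : DifferentiableOn ℂ f (ball 0 1) := hf.differentiableOn
  -- f nonzero on punctured ball
  have hfne : ∀ z ∈ ball (0:ℂ) 1, z ≠ 0 → f z ≠ 0 := by
    intro z hz hz0 hfz
    have h := hU z hz hz0
    rw [hfz, div_zero] at h
    simp at h
  -- u = dslope f 0
  set u : ℂ → ℂ := dslope f 0 with hu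
  have hud : DifferentiableOn ℂ u (ball 0 1) :=
    (Complex.differentiableOn_dslope hbmem).mpr hfd
  have hu0 : u 0 = 1 := by rw [hu, dslope_same, hf1]
  have hfzu : ∀ z : ℂ, f z = z * u z := by
    intro z
    have h := sub_smul_dslope f 0 z
    rw [sub_zero, smul_eq_mul, hf0, sub_zero] at h
    rw [← hu] at h
    exact h.symm
  have hune : ∀ z ∈ ball (0:ℂ) 1, u z ≠ 0 := by
    intro z hz
    rcases eq_or_ne z 0 with rfl | hz0
    · rw [hu0]; exact one_ne_zero
    · intro h0
      exact hfne z hz hz0 (by rw [hfzu z, h0, mul_zero])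
  -- v = dslope u 0
  set v : ℂ → ℂ := dslope u 0 with hv
  have hvd : DifferentiableOn ℂ v (ball 0 1) :=
    (Complex.differentiableOn_dslope hbmem).mpr hud
  have huzv : ∀ z : ℂ, u z = 1 + z * v z := by
    intro z
    have h := sub_smul_dslope u 0 z
    rw [sub_zero, smul_eq_mul, hu0] at h
    rw [← hv] at h
    linear_combination -h
  have huA : AnalyticOnNhd ℂ u (ball 0 1) := hud.analyticOnNhd isOpen_ball
  have hvA : AnalyticOnNhd ℂ v (ball 0 1) := hvd.analyticOnNhd isOpen_ball
  -- H = v / u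
  set H : ℂ → ℂ := fun z => v z / u z with hH
  have hHd : DifferentiableOn ℂ H (ball 0 1) := by
    intro z hz
    exact ((hvd z hz).div (hud z hz) (hune z hz))
  have hHA : AnalyticOnNhd ℂ H (ball 0 1) := hHd.analyticOnNhd isOpen_ball
  have hH'A : AnalyticOnNhd ℂ (deriv H) (ball 0 1) := hHA.deriv
  -- derivative formulas
  have hderivH : ∀ z ∈ ball (0:ℂ) 1,
      deriv H z = (deriv v z * u z - v z * deriv u z) / (u z) ^ 2 := by
    intro z hz
    have hva : DifferentiableAt ℂ v z := (hvA z hz).differentiableAt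
    have hua : DifferentiableAt ℂ u z := (huA z hz).differentiableAt
    exact (hva.hasDerivAt.div hua.hasDerivAt (hune z hz)).deriv
  have hu' : ∀ z ∈ ball (0:ℂ) 1, deriv u z = v z + z * deriv v z := by
    intro z hz
    have hva : DifferentiableAt ℂ v z := (hvA z hz).differentiableAt
    have h1 : HasDerivAt (fun w => 1 + w * v w) (1 * v z + z * deriv v z) z :=
      ((hasDerivAt_id z).mul hva.hasDerivAt).const_add 1
    have h2 : u = fun w => 1 + w * v w := funext huzv
    rw [h2]
    rw [h1.deriv]; ring
  have hf' : ∀ z ∈ ball (0:ℂ) 1, deriv f z = u z + z * deriv u z := by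
    intro z hz
    have hua : DifferentiableAt ℂ u z := (huA z hz).differentiableAt
    have h1 : HasDerivAt (fun w => w * u w) (1 * u z + z * deriv u z) z :=
      (hasDerivAt_id z).mul hua.hasDerivAt
    have h2 : f = fun w => w * u w := funext hfzu
    rw [h2]
    rw [h1.deriv]; ring
  -- Q = z^2 * H'
  set Q : ℂ → ℂ := fun z => z ^ 2 * deriv H z with hQ
  have hQd : DifferentiableOn ℂ Q (ball 0 1) := by
    intro z hz
    exact ((differentiableAt_id.pow 2).mul
      ((hH'A z hz).differentiableAt)).differentiableWithinAt
  have hQ0 : Q 0 = 0 := by simp [hQ]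
  -- identity
  have hQeq : ∀ z ∈ ball (0:ℂ) 1, z ≠ 0 →
      Q z = (z / f z) ^ 2 * deriv f z - 1 := by
    intro z hz hz0
    have e1 := hderivH z hz
    have e2 := hu' z hz
    have e3 := hf' z hz
    have e4 := hfzu z
    have e5 := huzv z
    have hne : u z ≠ 0 := hune z hz
    rw [hQ]
    show z ^ 2 * deriv H z = (z / f z) ^ 2 * deriv f z - 1
    rw [e1, e3, e4, e2]
    field_simp
    rw [e5]
    ring
  -- MapsTo
  have hQm : Set.MapsTo Q (ball (0:ℂ) 1) (ball (Q 0) 1) := by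
    intro z hz
    rw [hQ0, mem_ball_zero_iff]
    rcases eq_or_ne z 0 with rfl | hz0
    · rw [hQ0]; simp
    · rw [hQeq z hz hz0]; exact hU z hz hz0
  -- Schwarz, step 1
  have hs1 : ∀ z ∈ ball (0:ℂ) 1, ‖dslope Q 0 z‖ ≤ 1 := by
    intro z hz
    have := Complex.norm_dslope_le_div_of_mapsTo_ball hQd (hQm.mono_right ball_subset_closedBall) hz
    simpa using this
  -- deriv Q 0 = 0
  have hdQ0 : deriv Q 0 = 0 := by
    have hH'0 : DifferentiableAt ℂ (deriv H) 0 := (hH'A 0 h01).differentiableAt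
    have h1 : HasDerivAt Q (((2:ℕ) * (0:ℂ) ^ (2-1)) * deriv H 0 + (0:ℂ)^2 * deriv (deriv H) 0) 0 :=
      (hasDerivAt_pow 2 (0:ℂ)).mul hH'0.hasDerivAt
    rw [h1.deriv]; simp
  -- Q₂ = dslope Q 0
  set Q₂ : ℂ → ℂ := dslope Q 0 with hQ₂
  have hQ₂d : DifferentiableOn ℂ Q₂ (ball 0 1) :=
    (Complex.differentiableOn_dslope hbmem).mpr hQd
  have hQ₂0 : Q₂ 0 = 0 := by rw [hQ₂, dslope_same, hdQ0]
  -- Schwarz, step 2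
  have hs2 : ∀ z ∈ ball (0:ℂ) 1, ‖dslope Q₂ 0 z‖ ≤ 1 := by
    intro z hz
    have key : ∀ ε : ℝ, 0 < ε → ‖dslope Q₂ 0 z‖ ≤ 1 + ε := by
      intro ε hε
      have hm : Set.MapsTo Q₂ (ball (0:ℂ) 1) (ball (Q₂ 0) (1 + ε)) := by
        intro w hw
        rw [hQ₂0, mem_ball_zero_iff]
        exact lt_of_le_of_lt (hs1 w hw) (by linarith)
      have := Complex.norm_dslope_le_div_of_mapsTo_ball hQ₂d (hm.mono_right ball_subset_closedBall) hz
      simpa using this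
    exact le_of_forall_pos_le_add key
  -- |Q z| ≤ |z|^2
  have hQbound : ∀ z ∈ ball (0:ℂ) 1, ‖Q z‖ ≤ ‖z‖ ^ 2 := by
    intro z hz
    have t1 : Q z = z * Q₂ z := by
      have h := sub_smul_dslope Q 0 z
      rw [sub_zero, smul_eq_mul, hQ0, sub_zero] at h
      rw [← hQ₂] at h
      exact h.symm
    have t2 : Q₂ z = z * dslope Q₂ 0 z := by
      have h := sub_smul_dslope Q₂ 0 z
      rw [sub_zero, smul_eq_mul, hQ₂0, sub_zero] at h
      exact h.symm
    rw [t1, t2, norm_mul, norm_mul]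
    have h3 := hs2 z hz
    have h4 : (0:ℝ) ≤ ‖z‖ := norm_nonneg z
    nlinarith
  -- |H'| ≤ 1
  have hH'le : ∀ z ∈ ball (0:ℂ) 1, ‖deriv H z‖ ≤ 1 := by
    have punct : ∀ z ∈ ball (0:ℂ) 1, z ≠ 0 → ‖deriv H z‖ ≤ 1 := by
      intro z hz hz0
      have h1 : ‖z ^ 2 * deriv H z‖ ≤ ‖z‖ ^ 2 := hQbound z hz
      rw [norm_mul, norm_pow] at h1
      have h2 : (0:ℝ) < ‖z‖ ^ 2 := by
        have : (0:ℝ) < ‖z‖ := norm_pos_iff.mpr hz0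
        positivity
      nlinarith
    intro z hz
    rcases eq_or_ne z 0 with rfl | hz0
    · have hcont : Filter.Tendsto (fun w => ‖deriv H w‖) (nhdsWithin (0:ℂ) {(0:ℂ)}ᶜ)
          (nhds ‖deriv H 0‖) :=
        (((hH'A 0 h01).differentiableAt.continuousAt.tendsto).mono_left
          nhdsWithin_le_nhds).norm
      refine le_of_tendsto hcont ?_
      have hball0 : ∀ᶠ w in nhdsWithin (0:ℂ) {(0:ℂ)}ᶜ, w ∈ ball (0:ℂ) 1 :=
        Filter.Eventually.filter_mono nhdsWithin_le_nhds (isOpen_ball.eventually_mem h01)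
      filter_upwards [hball0, self_mem_nhdsWithin] with w hw hw0
      exact punct w hw hw0
    · exact punct z hz hz0
  -- H 0 = a₂
  have hdu0 : deriv u 0 = a₂ := by
    have heq : deriv f =ᶠ[nhds (0:ℂ)] fun z => u z + z * deriv u z :=
      Filter.eventuallyEq_of_mem hbmem hf'
    have hu'A : AnalyticOnNhd ℂ (deriv u) (ball 0 1) := huA.deriv
    have hdua : DifferentiableAt ℂ (deriv u) 0 := (hu'A 0 h01).differentiableAt
    have hua : DifferentiableAt ℂ u 0 := (huA 0 h01).differentiableAt
    have h1 : HasDerivAt (fun z => u z + z * deriv u z)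
        (deriv u 0 + (1 * deriv u 0 + 0 * deriv (deriv u) 0)) 0 :=
      hua.hasDerivAt.add ((hasDerivAt_id 0).mul hdua.hasDerivAt)
    have h2 : deriv (deriv f) 0 = 2 * deriv u 0 := by
      rw [heq.deriv_eq, h1.deriv]; ring
    rw [ha₂, iteratedDeriv_succ, iteratedDeriv_one, h2]
    ring
  have hH0 : H 0 = a₂ := by
    rw [hH]
    show v 0 / u 0 = a₂
    rw [hu0, div_one, hv, dslope_same, hdu0]
  -- |H z - a₂| ≤ |z|
  have hHsub : ∀ z ∈ ball (0:ℂ) 1, ‖H z - a₂‖ ≤ ‖z‖ := by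
    intro z hz
    have hdall : ∀ x ∈ ball (0:ℂ) 1, DifferentiableAt ℂ H x :=
      fun x hx => (hHA x hx).differentiableAt
    have := Convex.norm_image_sub_le_of_norm_deriv_le hdall hH'le
      (convex_ball (0:ℂ) 1) h01 hz
    rw [hH0] at this
    simpa using this
  -- |a₂| ≤ 2 via Banach fixed point
  have ha2le : ‖a₂‖ ≤ 2 := by
    by_contra hgt
    push_neg at hgt
    have ha2pos : (0:ℝ) < ‖a₂‖ := by linarith
    set ρ : ℝ := 2 / ‖a₂‖ with hρ
    have hρpos : 0 < ρ := by positivity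
    have hρlt : ρ < 1 := by
      rw [hρ, div_lt_one ha2pos]; linarith
    set T : ℂ → ℂ := fun z => (1 - z * (H z - a₂)) / a₂ with hT
    set s : Set ℂ := closedBall (0:ℂ) ρ with hs
    have hsub : s ⊆ ball (0:ℂ) 1 := closedBall_subset_ball hρlt
    have hmaps : Set.MapsTo T s s := by
      intro z hzs
      have hzb : z ∈ ball (0:ℂ) 1 := hsub hzs
      have hzρ : ‖z‖ ≤ ρ := by rwa [hs, mem_closedBall, dist_zero_right] at hzs
      rw [hs, mem_closedBall, dist_zero_right]
      have h1 : ‖(1:ℂ) - z * (H z - a₂)‖ ≤ 1 + ρ * ρ := by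
        calc ‖(1:ℂ) - z * (H z - a₂)‖ ≤ ‖(1:ℂ)‖ + ‖z * (H z - a₂)‖ := norm_sub_le _ _
        _ = 1 + ‖z‖ * ‖H z - a₂‖ := by rw [norm_one, norm_mul]
        _ ≤ 1 + ρ * ρ := by
            have := hHsub z hzb
            have h4 : ‖z‖ * ‖H z - a₂‖ ≤ ρ * ρ := by
              apply mul_le_mul hzρ (le_trans this hzρ) (norm_nonneg _) hρpos.le
            linarith
      rw [hT]
      show ‖(1 - z * (H z - a₂)) / a₂‖ ≤ ρ
      rw [norm_div]
      rw [hρ]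
      rw [div_le_div_iff₀ ha2pos ha2pos]
      calc ‖(1:ℂ) - z * (H z - a₂)‖ * ‖a₂‖ ≤ (1 + ρ * ρ) * ‖a₂‖ := by
            apply mul_le_mul_of_nonneg_right h1 (norm_nonneg _)
      _ ≤ 2 * ‖a₂‖ := by
            have : ρ * ρ ≤ 1 := by nlinarith
            nlinarith
    -- Lipschitz bound for T on s
    set C : ℝ := 4 / ‖a₂‖ ^ 2 with hC
    have hCpos : 0 < C := by positivity
    have hC1 : C < 1 := by
      rw [hC, div_lt_one (by positivity)]
      nlinarith
    have hTlip : ∀ x ∈ s, ∀ y ∈ s, ‖T y - T x‖ ≤ C * ‖y - x‖ := by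
      have hTdiff : ∀ x ∈ s, DifferentiableAt ℂ T x := by
        intro x hx
        have hHx : DifferentiableAt ℂ H x := (hHA x (hsub hx)).differentiableAt
        exact (((differentiableAt_id.mul (hHx.sub_const a₂)).const_sub 1).div_const a₂)
      have hTderiv : ∀ x ∈ s, ‖deriv T x‖ ≤ C := by
        intro x hx
        have hxb : x ∈ ball (0:ℂ) 1 := hsub hx
        have hxρ : ‖x‖ ≤ ρ := by rwa [hs, mem_closedBall, dist_zero_right] at hx
        have hHx : DifferentiableAt ℂ H x := (hHA x hxb).differentiableAt
        have h1 : HasDerivAt (fun w => w * (H w - a₂))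
            (1 * (H x - a₂) + x * deriv H x) x := by
          have := (hasDerivAt_id' x).mul (hHx.hasDerivAt.sub_const a₂)
          exact this
        have h2 : HasDerivAt T (-(1 * (H x - a₂) + x * deriv H x) / a₂) x :=
          (h1.const_sub 1).div_const a₂
        rw [h2.deriv]
        rw [norm_div]
        have h3 : ‖-(1 * (H x - a₂) + x * deriv H x)‖ ≤ ρ + ρ := by
          calc ‖-(1 * (H x - a₂) + x * deriv H x)‖
              = ‖(H x - a₂) + x * deriv H x‖ := by
                rw [norm_neg, one_mul]
          _ ≤ ‖H x - a₂‖ + ‖x * deriv H x‖ := norm_add_le _ _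
          _ ≤ ρ + ρ := by
              have e1 : ‖H x - a₂‖ ≤ ρ := le_trans (hHsub x hxb) hxρ
              have e2 : ‖x * deriv H x‖ ≤ ρ := by
                rw [norm_mul]
                calc ‖x‖ * ‖deriv H x‖ ≤ ρ * 1 :=
                      mul_le_mul hxρ (hH'le x hxb) (norm_nonneg _) hρpos.le
                _ = ρ := mul_one ρ
              linarith
        rw [hC]
        rw [div_le_div_iff₀ ha2pos (by positivity)]
        have hρa : ρ * ‖a₂‖ = 2 := by
          rw [hρ]; exact div_mul_cancel₀ 2 (ne_of_gt ha2pos)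
        have hrr : (ρ + ρ) * ‖a₂‖ ^ 2 = 4 * ‖a₂‖ := by
          linear_combination (2 * ‖a₂‖) * hρa
        calc ‖-(1 * (H x - a₂) + x * deriv H x)‖ * ‖a₂‖ ^ 2
            ≤ (ρ + ρ) * ‖a₂‖ ^ 2 := by
              apply mul_le_mul_of_nonneg_right h3 (by positivity)
        _ = 4 * ‖a₂‖ := hrr
      intro x hx y hy
      exact Convex.norm_image_sub_le_of_norm_deriv_le
        (fun w hw => hTdiff w hw) hTderiv (convex_closedBall (0:ℂ) ρ) hx hy
    -- contraction
    have hLip : LipschitzOnWith (Real.toNNReal C) T s := by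
      rw [lipschitzOnWith_iff_dist_le_mul]
      intro x hx y hy
      rw [dist_eq_norm, dist_eq_norm]
      rw [Real.coe_toNNReal C hCpos.le]
      exact hTlip y hy x hx
    have hcontr : ContractingWith (Real.toNNReal C) (hmaps.restrict T s s) := by
      constructor
      · rw [← NNReal.coe_lt_coe]
        rw [Real.coe_toNNReal C hCpos.le]
        exact hC1
      · exact hLip.mapsToRestrict hmaps
    have h0s : (0:ℂ) ∈ s := by
      rw [hs, mem_closedBall, dist_self]; exact hρpos.le
    obtain ⟨y, hys, hfix, -, -⟩ := ContractingWith.exists_fixedPoint'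
      (IsClosed.isComplete isClosed_closedBall) hmaps hcontr h0s (edist_ne_top _ _)
    have hyb : y ∈ ball (0:ℂ) 1 := hsub hys
    have hfix' : (1 - y * (H y - a₂)) / a₂ = y := hfix
    have hkey : (1:ℂ) - y * H y = (u y)⁻¹ := by
      have e5 := huzv y
      rw [hH]
      show (1:ℂ) - y * (v y / u y) = (u y)⁻¹
      field_simp [hune y hyb]
      linear_combination e5
    have hzero : (1:ℂ) - y * H y = 0 := by
      have : (1:ℂ) - y * (H y - a₂) = a₂ * y := by
        field_simp at hfix'
        linear_combination hfix'
      linear_combination this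
    rw [hkey] at hzero
    exact inv_ne_zero (hune y hyb) hzero
  -- final computation
  intro z hz0 hz2
  have hzne : z ≠ 0 := norm_pos_iff.mp hz0
  have hzb : z ∈ ball (0:ℂ) 1 := by
    rw [mem_ball_zero_iff]
    calc ‖z‖ < ‖a₂‖ / 2 := hz2
    _ ≤ 1 := by linarith
  have hHlow : ‖a₂‖ - ‖z‖ ≤ ‖H z‖ := by
    have h1 : ‖a₂‖ - ‖H z‖ ≤ ‖a₂ - H z‖ := norm_sub_norm_le _ _
    have h2 : ‖a₂ - H z‖ = ‖H z - a₂‖ := by rw [norm_sub_rev]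
    have h3 := hHsub z hzb
    linarith
  have hHne : H z ≠ 0 := by
    intro h0
    rw [h0, norm_zero] at hHlow
    linarith
  have hgform : ∀ w ∈ ball (0:ℂ) 1, w ≠ 0 → g w = w * H w / a₂ := by
    intro w hw hw0
    rw [hg]
    show (w / f w - 1) / (-a₂) = w * H w / a₂
    rw [hfzu w, hH]
    show (w / (w * u w) - 1) / (-a₂) = w * (v w / u w) / a₂
    have hnew : u w ≠ 0 := hune w hw
    field_simp
    linear_combination huzv w
  have hgz : g z = z * H z / a₂ := hgform z hzb hzne
  have hgderiv : deriv g z = (H z + z * deriv H z) / a₂ := by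
    have heq : g =ᶠ[nhds z] fun w => w * H w / a₂ := by
      have hopen : IsOpen (ball (0:ℂ) 1 ∩ {(0:ℂ)}ᶜ) :=
        isOpen_ball.inter isOpen_compl_singleton
      have hmem : ball (0:ℂ) 1 ∩ {(0:ℂ)}ᶜ ∈ nhds z :=
        hopen.mem_nhds ⟨hzb, hzne⟩
      filter_upwards [hmem] with w hw
      exact hgform w hw.1 hw.2
    rw [heq.deriv_eq]
    have hHz : DifferentiableAt ℂ H z := (hHA z hzb).differentiableAt
    have h1 : HasDerivAt (fun w => w * H w / a₂)
        ((1 * H z + z * deriv H z) / a₂) z :=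
      ((hasDerivAt_id z).mul hHz.hasDerivAt).div_const a₂
    rw [h1.deriv]; ring_nf
  have key : z * deriv g z / g z - 1 = z * deriv H z / H z := by
    rw [hgderiv, hgz]
    field_simp [hzne, hHne, ha₂0]
    ring
  rw [key]
  rw [norm_div, norm_mul]
  have hA := hH'le z hzb
  have hpos : 0 < ‖H z‖ := by
    have : 0 < ‖a₂‖ / 2 := lt_of_le_of_lt (norm_nonneg z) hz2
    linarith
  rw [div_lt_one hpos]
  have h5 : ‖z‖ * ‖deriv H z‖ ≤ ‖z‖ := by
    calc ‖z‖ * ‖deriv H z‖ ≤ ‖z‖ * 1 :=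
        mul_le_mul_of_nonneg_left hA (norm_nonneg z)
    _ = ‖z‖ := mul_one _
  have h6 : ‖z‖ < ‖a₂‖ - ‖z‖ := by linarith
  linarith
end

section
/- Let f ∈ U with a₂ = f''(0)/2 satisfying 0 < |a₂| ≤ 1, and define g(z) = (z/f(z) − 1)/(−a₂). Then g belongs to the class U on the disk |z| < |a₂|/2, i.e. |(z/g(z))² g'(z) − 1| < 1 for all |z| < |a₂|/2. -/
open Metric Set Complex

-- Möbius map bound: for ‖u‖<1, ‖v‖<1, ‖(v+u)/(1+conj u * v)‖ < 1
lemma mobius_lt_one {u v : ℂ} (hu : ‖u‖ < 1) (hv : ‖v‖ < 1) :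
    ‖(v + u) / (1 + (starRingEnd ℂ) u * v)‖ < 1 := by
  have hden : ‖(starRingEnd ℂ) u * v‖ < 1 := by
    rw [norm_mul, RingHomIsometric.norm_map]
    nlinarith [norm_nonneg u, norm_nonneg v]
  have hne : (1 : ℂ) + (starRingEnd ℂ) u * v ≠ 0 := by
    intro h
    have : ‖(starRingEnd ℂ) u * v‖ = 1 := by
      have : (starRingEnd ℂ) u * v = -1 := by linear_combination h
      rw [this]; simp
    linarith
  rw [norm_div, div_lt_one (norm_pos_iff.2 hne)]
  have key : Complex.normSq (1 + (starRingEnd ℂ) u * v) - Complex.normSq (v + u)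
      = (1 - Complex.normSq u) * (1 - Complex.normSq v) := by
    have h1 : ((Complex.normSq (1 + (starRingEnd ℂ) u * v) : ℂ))
        - (Complex.normSq (v + u) : ℂ)
        = ((1 - Complex.normSq u : ℝ) : ℂ) * ((1 - Complex.normSq v : ℝ) : ℂ) := by
      rw [← Complex.mul_conj, ← Complex.mul_conj]
      push_cast
      rw [← Complex.mul_conj, ← Complex.mul_conj]
      simp only [map_add, map_mul, map_one, Complex.conj_conj]
      ring
    exact_mod_cast h1
  have hsqu : Complex.normSq u = ‖u‖^2 := by rw [← Complex.sq_norm]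
  have hsqv : Complex.normSq v = ‖v‖^2 := by rw [← Complex.sq_norm]
  have hpos : Complex.normSq (v + u) < Complex.normSq (1 + (starRingEnd ℂ) u * v) := by
    nlinarith [norm_nonneg u, norm_nonneg v, mul_pos (by nlinarith [norm_nonneg u] : (0:ℝ) < 1 - ‖u‖^2) (by nlinarith [norm_nonneg v] : (0:ℝ) < 1 - ‖v‖^2)]
  have h2 : ‖v + u‖^2 < ‖1 + (starRingEnd ℂ) u * v‖^2 := by
    rw [← Complex.sq_norm, ← Complex.sq_norm] at hpos
    simpa using hpos
  nlinarith [norm_nonneg (v + u), norm_nonneg (1 + (starRingEnd ℂ) u * v)]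

lemma mobius_ne_zero {u v : ℂ} (hu : ‖u‖ < 1) (hv : ‖v‖ < 1) :
    (1 : ℂ) + (starRingEnd ℂ) u * v ≠ 0 := by
  have hden : ‖(starRingEnd ℂ) u * v‖ < 1 := by
    rw [norm_mul, RingHomIsometric.norm_map]
    nlinarith [norm_nonneg u, norm_nonneg v]
  intro h
  have : ‖(starRingEnd ℂ) u * v‖ = 1 := by
    have : (starRingEnd ℂ) u * v = -1 := by linear_combination h
    rw [this]; simp
  linarith

lemma schwarz_pick {φ : ℂ → ℂ} (hd : DifferentiableOn ℂ φ (ball 0 1))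
    (hm : MapsTo φ (ball 0 1) (ball 0 1)) {z : ℂ} (hz : z ∈ ball (0:ℂ) 1) :
    ‖deriv φ z‖ * (1 - ‖z‖^2) ≤ 1 - ‖φ z‖^2 := by
  set b := φ z with hb_def
  have hzn : ‖z‖ < 1 := by simpa [mem_ball, dist_eq_norm] using hz
  have hbn : ‖b‖ < 1 := by simpa [mem_ball, dist_eq_norm] using hm hz
  set M : ℂ → ℂ := fun ζ => (ζ + z) / (1 + (starRingEnd ℂ) z * ζ) with hM_def
  set N : ℂ → ℂ := fun ζ => (ζ + (-b)) / (1 + (starRingEnd ℂ) (-b) * ζ) with hN_def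
  have hMmaps : MapsTo M (ball 0 1) (ball 0 1) := by
    intro ζ hζ
    have : ‖ζ‖ < 1 := by simpa [mem_ball, dist_eq_norm] using hζ
    simpa [mem_ball, dist_eq_norm, hM_def] using mobius_lt_one hzn this
  have hNmaps : MapsTo N (ball 0 1) (ball 0 1) := by
    intro ζ hζ
    have : ‖ζ‖ < 1 := by simpa [mem_ball, dist_eq_norm] using hζ
    have hb' : ‖(-b)‖ < 1 := by simpa using hbn
    simpa [mem_ball, dist_eq_norm, hN_def] using mobius_lt_one hb' this
  have hM0 : M 0 = z := by simp [hM_def]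
  have hNb : N b = 0 := by simp [hN_def]
  -- differentiability of M on ball
  have hMd : DifferentiableOn ℂ M (ball 0 1) := by
    intro ζ hζ
    have hζn : ‖ζ‖ < 1 := by simpa [mem_ball, dist_eq_norm] using hζ
    exact (DifferentiableAt.div (differentiableAt_id.add_const z)
      ((differentiableAt_id.const_mul _).const_add 1)
      (mobius_ne_zero hzn hζn)).differentiableWithinAt
  have hNd : DifferentiableOn ℂ N (ball 0 1) := by
    intro ζ hζ
    have hζn : ‖ζ‖ < 1 := by simpa [mem_ball, dist_eq_norm] using hζ
    have hb' : ‖(-b)‖ < 1 := by simpa using hbn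
    exact (DifferentiableAt.div (differentiableAt_id.add_const (-b))
      ((differentiableAt_id.const_mul _).const_add 1)
      (mobius_ne_zero hb' hζn)).differentiableWithinAt
  -- the composite
  set F : ℂ → ℂ := N ∘ φ ∘ M with hF_def
  have hFd : DifferentiableOn ℂ F (ball 0 1) :=
    (hNd.comp (hd.comp hMd hMmaps) (hm.comp hMmaps))
  have hF0 : F 0 = 0 := by simp [hF_def, Function.comp, hM0, ← hb_def, hNb]
  have hFmaps : MapsTo F (ball 0 1) (ball (F 0) 1) := by
    rw [hF0]
    exact hNmaps.comp (hm.comp hMmaps)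
  -- derivative of M at 0
  have hMz : (1:ℂ) + (starRingEnd ℂ) z * 0 ≠ 0 := by simp
  have hM' : HasDerivAt M ((1 : ℂ) - (starRingEnd ℂ) z * z) 0 := by
    have h1 : HasDerivAt (fun ζ : ℂ => ζ + z) 1 0 := (hasDerivAt_id 0).add_const z
    have h2 : HasDerivAt (fun ζ : ℂ => 1 + (starRingEnd ℂ) z * ζ) ((starRingEnd ℂ) z) 0 := by
      simpa using ((hasDerivAt_id 0).const_mul ((starRingEnd ℂ) z)).const_add 1
    have := h1.div h2 hMz
    refine this.congr_deriv ?_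
    field_simp
    ring
  -- derivative of N at b
  have hNbne : (1:ℂ) + (starRingEnd ℂ) (-b) * b ≠ 0 := mobius_ne_zero (by simpa using hbn) hbn
  have hN' : HasDerivAt N ((1 + (starRingEnd ℂ) (-b) * b)⁻¹) b := by
    have h1 : HasDerivAt (fun ζ : ℂ => ζ + (-b)) 1 b := (hasDerivAt_id b).add_const (-b)
    have h2 : HasDerivAt (fun ζ : ℂ => 1 + (starRingEnd ℂ) (-b) * ζ) ((starRingEnd ℂ) (-b)) b := by
      simpa using ((hasDerivAt_id b).const_mul ((starRingEnd ℂ) (-b))).const_add 1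
    have := h1.div h2 hNbne
    refine this.congr_deriv ?_
    rw [show (b + -b : ℂ) = 0 by ring]
    rw [zero_mul, sub_zero, one_mul, sq, div_mul_eq_div_div, div_self hNbne, one_div]
  have hφ' : HasDerivAt φ (deriv φ z) z :=
    (hd.differentiableAt (isOpen_ball.mem_nhds hz)).hasDerivAt
  have hφ'' : HasDerivAt φ (deriv φ z) (M 0) := by rw [hM0]; exact hφ'
  have hφM : HasDerivAt (φ ∘ M) (deriv φ z * (1 - (starRingEnd ℂ) z * z)) 0 :=
    hφ''.comp 0 hM'
  have hF' : HasDerivAt F ((1 + (starRingEnd ℂ) (-b) * b)⁻¹ * (deriv φ z * (1 - (starRingEnd ℂ) z * z))) 0 := by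
    have hb2 : (φ ∘ M) 0 = b := by simp [Function.comp, hM0, hb_def]
    have hN'' : HasDerivAt N ((1 + (starRingEnd ℂ) (-b) * b)⁻¹) ((φ ∘ M) 0) := by
      rw [hb2]; exact hN'
    exact hN''.comp 0 hφM
  have key := Complex.norm_deriv_le_div_of_mapsTo_ball hFd (hFmaps.mono_right ball_subset_closedBall) one_pos
  rw [hF'.deriv] at key
  have e1 : (starRingEnd ℂ) z * z = ((‖z‖^2 : ℝ) : ℂ) := by
    rw [mul_comm, Complex.mul_conj]
    norm_cast
    rw [← Complex.sq_norm]
  have e2 : (1:ℂ) + (starRingEnd ℂ) (-b) * b = ((1 - ‖b‖^2 : ℝ) : ℂ) := by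
    have : (starRingEnd ℂ) (-b) * b = -((‖b‖^2 : ℝ) : ℂ) := by
      rw [map_neg, neg_mul, mul_comm, Complex.mul_conj]
      norm_cast
      rw [← Complex.sq_norm]
    rw [this]; push_cast; ring
  rw [e1, e2] at key
  have hb2pos : (0:ℝ) < 1 - ‖b‖^2 := by nlinarith [norm_nonneg b]
  have hz2pos : (0:ℝ) < 1 - ‖z‖^2 := by nlinarith [norm_nonneg z]
  rw [norm_mul, norm_mul, norm_inv] at key
  have e3 : ‖((1 - ‖b‖^2 : ℝ) : ℂ)‖ = 1 - ‖b‖^2 := by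
    rw [Complex.norm_real, Real.norm_of_nonneg hb2pos.le]
  have e4 : ‖(1:ℂ) - ((‖z‖^2 : ℝ) : ℂ)‖ = 1 - ‖z‖^2 := by
    have : (1:ℂ) - ((‖z‖^2 : ℝ) : ℂ) = ((1 - ‖z‖^2 : ℝ) : ℂ) := by push_cast; ring
    rw [this, Complex.norm_real, Real.norm_of_nonneg hz2pos.le]
  rw [e3, e4, div_one] at key
  have := mul_le_mul_of_nonneg_left key hb2pos.le
  rw [mul_one] at this
  calc ‖deriv φ z‖ * (1 - ‖z‖^2)
      = (1 - ‖b‖^2) * ((1 - ‖b‖^2)⁻¹ * (‖deriv φ z‖ * (1 - ‖z‖^2))) := by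
        rw [← mul_assoc, mul_inv_cancel₀ hb2pos.ne', one_mul]
    _ ≤ 1 - ‖b‖^2 := this

lemma schwarz_pick' {φ : ℂ → ℂ} (hd : DifferentiableOn ℂ φ (ball 0 1))
    (hm : ∀ ζ ∈ ball (0:ℂ) 1, ‖φ ζ‖ ≤ 1) {z : ℂ} (hz : z ∈ ball (0:ℂ) 1) :
    ‖deriv φ z‖ * (1 - ‖z‖^2) ≤ 1 - ‖φ z‖^2 := by
  have hzn : ‖z‖ < 1 := by simpa [mem_ball, dist_eq_norm] using hz
  have key : ∀ ε : ℝ, 0 < ε → ε < 1 →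
      (1-ε) * ‖deriv φ z‖ * (1-‖z‖^2) ≤ 1 - (1-ε)^2 * ‖φ z‖^2 := by
    intro ε hε0 hε1
    set ψ : ℂ → ℂ := fun ζ => ((1-ε:ℝ):ℂ) * φ ζ with hψ_def
    have hψd : DifferentiableOn ℂ ψ (ball 0 1) := hd.const_smul ((1-ε:ℝ):ℂ)
    have hψm : MapsTo ψ (ball 0 1) (ball 0 1) := by
      intro ζ hζ
      have h1 : ‖φ ζ‖ ≤ 1 := hm ζ hζ
      have : ‖ψ ζ‖ ≤ 1 - ε := by
        rw [hψ_def]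
        simp only [norm_mul, Complex.norm_real]
        rw [Real.norm_of_nonneg (by linarith)]
        nlinarith
      simp only [mem_ball, dist_eq_norm, sub_zero]
      linarith
    have hψ' : deriv ψ z = ((1-ε:ℝ):ℂ) * deriv φ z := by
      rw [hψ_def]
      exact deriv_const_mul _ (hd.differentiableAt (isOpen_ball.mem_nhds hz))
    have := schwarz_pick hψd hψm hz
    rw [hψ'] at this
    rw [norm_mul, Complex.norm_real, Real.norm_of_nonneg (by linarith)] at this
    have hval : ‖ψ z‖ = (1-ε) * ‖φ z‖ := by
      rw [hψ_def]
      simp only [norm_mul, Complex.norm_real]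
      rw [Real.norm_of_nonneg (by linarith)]
    rw [hval] at this
    calc (1-ε) * ‖deriv φ z‖ * (1-‖z‖^2) ≤ 1 - ((1-ε) * ‖φ z‖)^2 := this
      _ = 1 - (1-ε)^2 * ‖φ z‖^2 := by ring
  by_contra hcon
  push_neg at hcon
  set X := ‖deriv φ z‖ * (1 - ‖z‖^2) with hX
  set u := ‖φ z‖ with hu
  have hu1 : u ≤ 1 := hm z hz
  have hu0 : 0 ≤ u := norm_nonneg _
  have hX0 : 0 ≤ X := by
    apply mul_nonneg (norm_nonneg _)
    nlinarith [norm_nonneg z]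
  have hd0 : 0 < X - (1 - u^2) := by nlinarith
  set ε := (X - (1 - u^2)) / (2 * (X + 2)) with hε
  have hden : 0 < 2 * (X + 2) := by linarith
  have hε0 : 0 < ε := div_pos hd0 hden
  have hε1 : ε < 1 := by
    rw [hε, div_lt_one hden]
    nlinarith
  have hkey := key ε hε0 hε1
  rw [mul_assoc, ← hX] at hkey
  have h2 : X - (1 - u^2) ≤ ε * X + 2 * ε := by
    nlinarith [sq_nonneg (ε*u), mul_le_mul_of_nonneg_left (show u^2 ≤ 1 by nlinarith) hε0.le]
  have h3 : ε * (X + 2) = (X - (1 - u^2)) / 2 := by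
    rw [hε]; field_simp
  nlinarith

-- helper: norm bound at 0 by continuity from punctured neighborhood
lemma norm_le_of_punctured {G : ℂ → ℂ} (hc : ContinuousAt G 0)
    (hb : ∀ᶠ ζ in nhdsWithin (0:ℂ) {(0:ℂ)}ᶜ, ‖G ζ‖ ≤ 1) : ‖G 0‖ ≤ 1 := by
  have h1 : Filter.Tendsto (fun ζ => ‖G ζ‖) (nhdsWithin (0:ℂ) {(0:ℂ)}ᶜ) (nhds ‖G 0‖) :=
    (hc.norm.tendsto).mono_left nhdsWithin_le_nhds
  exact le_of_tendsto h1 hb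

lemma final_ineq {a s u b : ℝ} (ha0 : 0 < a) (ha1 : a ≤ 1) (hs0 : 0 < s)
    (hsa : s < a/2) (hu0 : 0 ≤ u) (hu1 : u ≤ 1) (hb0 : 0 ≤ b)
    (hSP : b*(1-s^2) ≤ 1-u^2) : s^2*(a*b+u^2) < (a - s*u)^2 := by
  have hs12 : s < 1/2 := by linarith
  have h1s : (0:ℝ) < 1 - s^2 := by nlinarith
  have key1 : s^2*b*(1-s^2) ≤ s^2*(1-u^2) := by nlinarith [sq_nonneg s]
  have key2 : s^2*(1-u^2) ≤ 2*s*(1-u)*(1-s^2) := by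
    nlinarith [mul_nonneg (mul_nonneg hs0.le (sub_nonneg.2 hu1))
      (show (0:ℝ) ≤ 2*(1-s^2) - s*(1+u) by nlinarith)]
  have key3 : s^2*b ≤ 2*s*(1-u) := by
    have := le_trans key1 key2
    exact le_of_mul_le_mul_right this h1s
  have key4 : s^2*b + 2*s*u < a := by nlinarith
  nlinarith [mul_lt_mul_of_pos_left key4 ha0, sq_nonneg (s*u)]

set_option maxHeartbeats 4000000 in
theorem stmt_18 (f : ℂ → ℂ)
    (hf : AnalyticOn ℂ f (ball 0 1))
    (hf0 : f 0 = 0) (hf1 : deriv f 0 = 1)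
    (hU : ∀ z ∈ ball (0:ℂ) 1, z ≠ 0 → ‖(z / f z) ^ 2 * deriv f z - 1‖ < 1)
    (a₂ : ℂ) (ha₂ : a₂ = iteratedDeriv 2 f 0 / 2)
    (ha₂0 : 0 < ‖a₂‖) (ha₂1 : ‖a₂‖ ≤ 1)
    (g : ℂ → ℂ) (hg : g = fun z => (z / f z - 1) / (-a₂)) :
    ∀ z : ℂ, z ≠ 0 → ‖z‖ < ‖a₂‖ / 2 →
      ‖(z / g z) ^ 2 * deriv g z - 1‖ < 1 := by
  have hDopen : IsOpen (ball (0:ℂ) 1) := isOpen_ball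
  have h0D : (0:ℂ) ∈ ball (0:ℂ) 1 := mem_ball_self one_pos
  have hfd : DifferentiableOn ℂ f (ball 0 1) := hf.differentiableOn
  -- f ≠ 0 away from 0
  have hfne : ∀ ζ ∈ ball (0:ℂ) 1, ζ ≠ 0 → f ζ ≠ 0 := by
    intro ζ hζ hζ0 h0
    have := hU ζ hζ hζ0
    rw [h0, div_zero] at this
    simp at this
  -- q = dslope f 0
  set q : ℂ → ℂ := dslope f 0 with hq_def
  have hqd : DifferentiableOn ℂ q (ball 0 1) :=
    (Complex.differentiableOn_dslope (hDopen.mem_nhds h0D)).mpr hfd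
  have hq0 : q 0 = 1 := by rw [hq_def, dslope_same, hf1]
  have hqz : ∀ ζ : ℂ, ζ ≠ 0 → q ζ = f ζ / ζ := by
    intro ζ h
    rw [hq_def, dslope_of_ne _ h, slope_def_field, hf0, sub_zero, sub_zero]
  have hqne : ∀ ζ ∈ ball (0:ℂ) 1, q ζ ≠ 0 := by
    intro ζ hζ
    rcases eq_or_ne ζ 0 with rfl | h
    · rw [hq0]; exact one_ne_zero
    · rw [hqz ζ h]
      exact div_ne_zero (hfne ζ hζ h) h
  have hqa : AnalyticOnNhd ℂ q (ball 0 1) := hqd.analyticOnNhd hDopen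
  -- p = q⁻¹
  set p : ℂ → ℂ := fun ζ => (q ζ)⁻¹ with hp_def
  have hpa : AnalyticOnNhd ℂ p (ball 0 1) := fun ζ hζ => (hqa ζ hζ).inv (hqne ζ hζ)
  have hpd : DifferentiableOn ℂ p (ball 0 1) := hpa.differentiableOn
  have hp0 : p 0 = 1 := by rw [hp_def]; simp [hq0]
  have hpz : ∀ ζ ∈ ball (0:ℂ) 1, ζ ≠ 0 → p ζ = ζ / f ζ := by
    intro ζ hζ h
    rw [hp_def]; simp only []
    rw [hqz ζ h, inv_div]
  have hdpa : AnalyticOnNhd ℂ (deriv p) (ball 0 1) := hpa.deriv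
  -- derivative of p at ζ
  have hpder : ∀ ζ ∈ ball (0:ℂ) 1, deriv p ζ = -deriv q ζ / (q ζ)^2 := by
    intro ζ hζ
    exact deriv_inv'' (hqd.differentiableAt (hDopen.mem_nhds hζ)) (hqne ζ hζ)
  -- f = z * q on ball, deriv f = q + z q'
  have hfeq : ∀ ζ ∈ ball (0:ℂ) 1, f ζ = ζ * q ζ := by
    intro ζ _
    rcases eq_or_ne ζ 0 with rfl | h
    · simp [hf0]
    · rw [hqz ζ h, mul_div_cancel₀ _ h]
  have hderf : ∀ ζ ∈ ball (0:ℂ) 1, deriv f ζ = q ζ + ζ * deriv q ζ := by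
    intro ζ hζ
    have hev : f =ᶠ[nhds ζ] fun ξ => ξ * q ξ :=
      Filter.eventuallyEq_of_mem (hDopen.mem_nhds hζ) hfeq
    rw [hev.deriv_eq]
    rw [deriv_fun_mul differentiableAt_fun_id (hqd.differentiableAt (hDopen.mem_nhds hζ))]
    simp
  -- a₂ = deriv q 0 and deriv p 0 = -a₂
  have hqda : AnalyticOnNhd ℂ (deriv q) (ball 0 1) := hqa.deriv
  have ha2q : a₂ = deriv q 0 := by
    have h2 : iteratedDeriv 2 f 0 = deriv (deriv f) 0 := by
      rw [iteratedDeriv_succ, iteratedDeriv_one]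
    have hev : deriv f =ᶠ[nhds 0] fun ζ => q ζ + ζ * deriv q ζ :=
      Filter.eventuallyEq_of_mem (hDopen.mem_nhds h0D) hderf
    have h3 : deriv (deriv f) 0 = 2 * deriv q 0 := by
      rw [hev.deriv_eq]
      rw [deriv_fun_add (hqd.differentiableAt (hDopen.mem_nhds h0D))
        (differentiableAt_fun_id.fun_mul ((hqda 0 h0D).differentiableAt))]
      rw [deriv_fun_mul differentiableAt_fun_id ((hqda 0 h0D).differentiableAt)]
      simp
      ring
    rw [ha₂, h2, h3]
    field_simp
  have hpder0 : deriv p 0 = -a₂ := by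
    rw [hpder 0 h0D, hq0, ha2q]; simp
  -- h = p - z p' - 1
  set h : ℂ → ℂ := fun ζ => p ζ - ζ * deriv p ζ - 1 with hh_def
  have hhd : DifferentiableOn ℂ h (ball 0 1) := by
    intro ζ hζ
    exact ((hpd ζ hζ).sub ((differentiableAt_fun_id.mul
      ((hdpa ζ hζ).differentiableAt)).differentiableWithinAt)).sub
      (differentiableWithinAt_const 1)
  have hh0 : h 0 = 0 := by rw [hh_def]; simp [hp0]
  have hhU : ∀ ζ ∈ ball (0:ℂ) 1, ‖h ζ‖ < 1 := by
    intro ζ hζ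
    rcases eq_or_ne ζ 0 with rfl | hne
    · rw [hh0]; simp
    · have key : h ζ = (ζ / f ζ)^2 * deriv f ζ - 1 := by
        rw [hh_def]; simp only []
        rw [← hpz ζ hζ hne, hderf ζ hζ, hpder ζ hζ, hp_def]
        simp only []
        have hqn := hqne ζ hζ
        field_simp
        ring
      rw [key]; exact hU ζ hζ hne
  have hdh0 : deriv h 0 = 0 := by
    have hpd0 : DifferentiableAt ℂ p 0 := hpd.differentiableAt (hDopen.mem_nhds h0D)
    have hdpd0 : DifferentiableAt ℂ (deriv p) 0 := (hdpa 0 h0D).differentiableAt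
    rw [hh_def]
    rw [deriv_sub_const, deriv_fun_sub hpd0 (differentiableAt_fun_id.fun_mul hdpd0),
      deriv_fun_mul differentiableAt_fun_id hdpd0]
    simp
  -- ψ = dslope (dslope h 0) 0, with ‖ψ‖ ≤ 1 on ball
  set h1 : ℂ → ℂ := dslope h 0 with hh1_def
  set ψ : ℂ → ℂ := dslope h1 0 with hψ_def
  have hh1d : DifferentiableOn ℂ h1 (ball 0 1) :=
    (Complex.differentiableOn_dslope (hDopen.mem_nhds h0D)).mpr hhd
  have hψd : DifferentiableOn ℂ ψ (ball 0 1) :=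
    (Complex.differentiableOn_dslope (hDopen.mem_nhds h0D)).mpr hh1d
  have hh1_0 : h1 0 = 0 := by rw [hh1_def, dslope_same, hdh0]
  have hh1le : ∀ ζ ∈ ball (0:ℂ) 1, ‖h1 ζ‖ ≤ 1 := by
    intro ζ hζ
    have hmaps : Set.MapsTo h (ball 0 1) (ball (h 0) 1) := by
      intro ξ hξ
      rw [hh0]
      simpa [mem_ball, dist_eq_norm] using hhU ξ hξ
    simpa using Complex.norm_dslope_le_div_of_mapsTo_ball hhd (hmaps.mono_right ball_subset_closedBall) hζ
  have hψle : ∀ ζ ∈ ball (0:ℂ) 1, ‖ψ ζ‖ ≤ 1 := by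
    intro ζ hζ
    refine le_of_forall_pos_le_add (fun ε hε => ?_)
    have hmaps : Set.MapsTo h1 (ball 0 1) (ball (h1 0) (1 + ε)) := by
      intro ξ hξ
      rw [hh1_0]
      simp only [mem_ball, dist_eq_norm, sub_zero]
      exact lt_of_le_of_lt (hh1le ξ hξ) (by linarith)
    have := Complex.norm_dslope_le_div_of_mapsTo_ball hh1d (hmaps.mono_right ball_subset_closedBall) hζ
    simpa using this
  have hψz : ∀ ζ : ℂ, ζ ≠ 0 → ψ ζ = h ζ / ζ^2 := by
    intro ζ h
    rw [hψ_def, dslope_of_ne _ h, slope_def_field, hh1_0, sub_zero, sub_zero,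
      hh1_def, dslope_of_ne _ h, slope_def_field, hh0, sub_zero, sub_zero]
    rw [div_div, sq]
  -- w = dslope (1 - p) 0
  set w : ℂ → ℂ := dslope (fun ζ => 1 - p ζ) 0 with hw_def
  have hwd : DifferentiableOn ℂ w (ball 0 1) :=
    (Complex.differentiableOn_dslope (hDopen.mem_nhds h0D)).mpr
      (fun ζ hζ => (differentiableWithinAt_const 1).sub (hpd ζ hζ))
  have hw0 : w 0 = a₂ := by
    rw [hw_def, dslope_same, deriv_const_sub, hpder0, neg_neg]
  have hwz : ∀ ζ : ℂ, ζ ≠ 0 → w ζ = (1 - p ζ) / ζ := by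
    intro ζ h
    rw [hw_def, dslope_of_ne _ h, slope_def_field, hp0, sub_zero]
    simp
  have hwder : ∀ ζ ∈ ball (0:ℂ) 1, ζ ≠ 0 → deriv w ζ = ψ ζ := by
    intro ζ hζ hne
    have hev : w =ᶠ[nhds ζ] fun ξ => (1 - p ξ) / ξ := by
      filter_upwards [isOpen_compl_singleton.mem_nhds hne] with ξ hξ
      exact hwz ξ hξ
    rw [hev.deriv_eq]
    have hp' : HasDerivAt p (deriv p ζ) ζ :=
      (hpd.differentiableAt (hDopen.mem_nhds hζ)).hasDerivAt
    have h1 : HasDerivAt (fun ξ => 1 - p ξ) (-deriv p ζ) ζ := hp'.const_sub 1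
    have h2 : HasDerivAt (fun ξ : ℂ => ξ) 1 ζ := hasDerivAt_id ζ
    have h3 : HasDerivAt (fun ξ => (1 - p ξ) / ξ) _ ζ := h1.div h2 hne
    rw [h3.deriv, hψz ζ hne, hh_def]
    simp only [mul_one]
    ring
  have hψa : AnalyticOnNhd ℂ ψ (ball 0 1) := hψd.analyticOnNhd hDopen
  have hwa : AnalyticOnNhd ℂ w (ball 0 1) := hwd.analyticOnNhd hDopen
  have hwderle : ∀ ζ ∈ ball (0:ℂ) 1, ‖deriv w ζ‖ ≤ 1 := by
    intro ζ hζ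
    rcases eq_or_ne ζ 0 with rfl | hne
    · apply norm_le_of_punctured ((hwa.deriv 0 h0D).continuousAt)
      filter_upwards [mem_nhdsWithin_of_mem_nhds (hDopen.mem_nhds h0D),
        self_mem_nhdsWithin] with ξ hξ hξne
      rw [hwder ξ hξ hξne]
      exact hψle ξ hξ
    · rw [hwder ζ hζ hne]
      exact hψle ζ hζ
  have homega : ∀ ζ ∈ ball (0:ℂ) 1, ‖w ζ - a₂‖ ≤ ‖ζ‖ := by
    intro ζ hζ
    have := Convex.norm_image_sub_le_of_norm_deriv_le
      (f := w) (s := ball (0:ℂ) 1)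
      (fun ξ hξ => hwd.differentiableAt (hDopen.mem_nhds hξ))
      hwderle (convex_ball 0 1) h0D hζ
    simpa [hw0] using this
  -- φ = dslope w 0
  set φ : ℂ → ℂ := dslope w 0 with hφ_def
  have hφd : DifferentiableOn ℂ φ (ball 0 1) :=
    (Complex.differentiableOn_dslope (hDopen.mem_nhds h0D)).mpr hwd
  have hφz : ∀ ζ : ℂ, ζ ≠ 0 → φ ζ = (w ζ - a₂) / ζ := by
    intro ζ h
    rw [hφ_def, dslope_of_ne _ h, slope_def_field, hw0, sub_zero]
  have hφle : ∀ ζ ∈ ball (0:ℂ) 1, ‖φ ζ‖ ≤ 1 := by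
    intro ζ hζ
    rcases eq_or_ne ζ 0 with rfl | hne
    · apply norm_le_of_punctured
        ((hφd.differentiableAt (hDopen.mem_nhds h0D)).continuousAt)
      filter_upwards [mem_nhdsWithin_of_mem_nhds (hDopen.mem_nhds h0D),
        self_mem_nhdsWithin] with ξ hξ hξne
      rw [hφz ξ hξne, norm_div]
      rw [div_le_one (norm_pos_iff.2 hξne)]
      exact homega ξ hξ
    · rw [hφz ζ hne, norm_div]
      rw [div_le_one (norm_pos_iff.2 hne)]
      exact homega ζ hζ
  -- structural identity : p ζ = 1 - a₂ ζ - ζ² φ ζ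
  have hstruct : ∀ ζ : ℂ, p ζ = 1 - a₂ * ζ - ζ^2 * φ ζ := by
    intro ζ
    rcases eq_or_ne ζ 0 with rfl | h
    · simp [hp0]
    · rw [hφz ζ h, hwz ζ h]
      field_simp
      ring
  -- main part
  intro z hz0 hzs
  have hzD : z ∈ ball (0:ℂ) 1 := by
    simp only [mem_ball, dist_eq_norm, sub_zero]
    linarith [ha₂1]
  set A := φ z with hA_def
  set B := deriv φ z with hB_def
  have hSP : ‖B‖ * (1 - ‖z‖^2) ≤ 1 - ‖A‖^2 := schwarz_pick' hφd hφle hzD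
  have hφ' : HasDerivAt φ B z :=
    (hφd.differentiableAt (hDopen.mem_nhds hzD)).hasDerivAt
  have hderp : deriv p z = -a₂ - (2*z*A + z^2*B) := by
    have hpe : p = fun ζ => 1 - a₂*ζ - ζ^2*φ ζ := funext hstruct
    have h1 : HasDerivAt (fun ζ : ℂ => a₂*ζ) a₂ z := by
      simpa using (hasDerivAt_id z).const_mul a₂
    have h2 : HasDerivAt (fun ζ : ℂ => ζ^2) (2*z) z := by
      simpa using hasDerivAt_pow 2 z
    have h3 : HasDerivAt (fun ζ : ℂ => ζ^2 * φ ζ) (2*z*A + z^2*B) z := by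
      have := h2.mul hφ'
      refine this.congr_deriv ?_
      rw [hA_def, hB_def]
    have H : HasDerivAt p (-a₂ - (2*z*A + z^2*B)) z := by
      rw [hpe]
      have := (h1.const_sub 1).sub h3
      refine this.congr_deriv ?_
      try ring
    exact H.deriv
  -- final assembly
  have haz : a₂ ≠ 0 := by
    intro hc; rw [hc] at ha₂0; simp at ha₂0
  set Y := a₂ + z * A with hY_def
  have hu1 : ‖A‖ ≤ 1 := hφle z hzD
  have hzA : ‖z * A‖ ≤ ‖z‖ := by
    rw [norm_mul]
    nlinarith [norm_nonneg z, norm_nonneg A]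
  have hYlb : ‖a₂‖ - ‖z‖*‖A‖ ≤ ‖Y‖ := by
    have h1 : ‖a₂‖ ≤ ‖Y‖ + ‖z*A‖ := by
      calc ‖a₂‖ = ‖Y - z*A‖ := by rw [hY_def]; ring_nf
        _ ≤ ‖Y‖ + ‖z*A‖ := norm_sub_le _ _
    rw [norm_mul] at h1
    linarith
  have hYlbpos : 0 < ‖a₂‖ - ‖z‖*‖A‖ := by
    nlinarith [norm_nonneg z, norm_nonneg A]
  have hYpos : 0 < ‖Y‖ := lt_of_lt_of_le hYlbpos hYlb
  have hYne : Y ≠ 0 := norm_pos_iff.1 hYpos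
  have hgzval : g z = z * Y / a₂ := by
    rw [hg]
    simp only []
    rw [← hpz z hzD hz0, hstruct z, hY_def, hA_def]
    rw [div_eq_div_iff (neg_ne_zero.2 haz) haz]
    ring
  have hgder : deriv g z = (a₂ + 2*z*A + z^2*B)/a₂ := by
    have hev : g =ᶠ[nhds z] fun ζ => (p ζ - 1)/(-a₂) := by
      filter_upwards [hDopen.mem_nhds hzD, isOpen_compl_singleton.mem_nhds hz0]
        with ξ h1 h2
      rw [hg]
      simp only []
      rw [hpz ξ h1 h2]
    rw [hev.deriv_eq, deriv_div_const, deriv_sub_const, hderp]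
    rw [div_eq_div_iff (neg_ne_zero.2 haz) haz]
    ring
  have hexpr : (z / g z)^2 * deriv g z - 1 = z^2 * (a₂*B - A^2)/Y^2 := by
    rw [hgzval, hgder]
    field_simp
    ring
  rw [hexpr]
  rw [norm_div, norm_mul, norm_pow, norm_pow]
  rw [div_lt_one (by positivity)]
  have hnum : ‖a₂*B - A^2‖ ≤ ‖a₂‖*‖B‖ + ‖A‖^2 := by
    calc ‖a₂*B - A^2‖ ≤ ‖a₂*B‖ + ‖A^2‖ := norm_sub_le _ _
      _ = ‖a₂‖*‖B‖ + ‖A‖^2 := by rw [norm_mul, norm_pow]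
  have hfin : ‖z‖^2*(‖a₂‖*‖B‖+‖A‖^2) < (‖a₂‖ - ‖z‖*‖A‖)^2 :=
    final_ineq ha₂0 ha₂1 (norm_pos_iff.2 hz0) hzs (norm_nonneg A) hu1
      (norm_nonneg B) hSP
  have hY2 : (‖a₂‖ - ‖z‖*‖A‖)^2 ≤ ‖Y‖^2 := by
    nlinarith [hYlbpos.le, hYlb]
  nlinarith [mul_le_mul_of_nonneg_left hnum (sq_nonneg ‖z‖)]
end

section
/- For 0 < b ≤ 2, the function f_b defined by z/f_b(z) = 1 + bz + z², i.e. f_b(z) = z/(1 + bz + z²), belongs to the class U, and the associated function g_b(z) = z + z²/b is starlike on the disk |z| < b/2 but satisfies g_b'(−b/2) = 0, so g_b is not univalent on any larger disk centered at 0. -/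
open Metric

-- denominator nonzero
lemma den_ne (b : ℝ) (hb0 : 0 < b) (hb2 : b ≤ 2) (z : ℂ) (hz : ‖z‖ < 1) :
    (1 : ℂ) + (b:ℂ) * z + z ^ 2 ≠ 0 := by
  intro h
  have hxy : z.re ^ 2 + z.im ^ 2 < 1 := by
    have h1 : z.re ^ 2 + z.im ^ 2 = ‖z‖ ^ 2 := by
      rw [Complex.sq_norm, Complex.normSq_apply]; ring
    have : ‖z‖ ^ 2 < 1 := by nlinarith [norm_nonneg z]
    linarith [h1 ▸ this]
  rw [Complex.ext_iff] at h
  obtain ⟨hre, him⟩ := h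
  simp [Complex.add_re, Complex.add_im, Complex.mul_re, Complex.mul_im, pow_two,
    Complex.ofReal_re, Complex.ofReal_im] at hre him
  -- him : b * z.im + (z.re * z.im + z.im * z.re) = 0
  have him' : z.im * (b + 2 * z.re) = 0 := by ring_nf; ring_nf at him; linarith
  rcases mul_eq_zero.1 him' with hy | hx
  · rw [hy] at hre hxy
    have hxneg : z.re < 0 := by nlinarith [sq_nonneg z.re]
    have h1 : 1 + 2*z.re + z.re^2 ≤ 0 := by
      nlinarith [mul_nonneg (by linarith : (0:ℝ) ≤ 2 - b) (by linarith : (0:ℝ) ≤ -z.re)]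
    have h2 : (1 + z.re)^2 = 0 := by nlinarith [sq_nonneg (1 + z.re)]
    have h3 : 1 + z.re = 0 := by
      have := pow_eq_zero_iff (n := 2) (by norm_num) |>.1 h2
      linarith
    nlinarith
  · have hxe : z.re = -(b/2) := by linarith
    rw [hxe] at hre hxy
    nlinarith

theorem stmt_19 (b : ℝ) (hb0 : 0 < b) (hb2 : b ≤ 2)
    (fb gb : ℂ → ℂ)
    (hfb : fb = fun z => z / (1 + (b:ℂ) * z + z ^ 2))
    (hgb : gb = fun z => z + z ^ 2 / (b:ℂ)) :
    (AnalyticOn ℂ fb (ball 0 1) ∧ fb 0 = 0 ∧ deriv fb 0 = 1 ∧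
      ∀ z ∈ ball (0:ℂ) 1, z ≠ 0 → ‖(z / fb z) ^ 2 * deriv fb z - 1‖ < 1) ∧
    (∀ z : ℂ, 0 < ‖z‖ → ‖z‖ < b / 2 → 0 < (z * deriv gb z / gb z).re) ∧
    deriv gb (-(b:ℂ) / 2) = 0 ∧
    (∀ r : ℝ, b / 2 < r → ¬ Set.InjOn gb (ball 0 r)) := by
  have hbC : (b : ℂ) ≠ 0 := by exact_mod_cast hb0.ne'
  -- derivative of fb at points of the ball
  have hden : ∀ z ∈ ball (0:ℂ) 1, (1 : ℂ) + (b:ℂ) * z + z ^ 2 ≠ 0 := by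
    intro z hz
    exact den_ne b hb0 hb2 z (by simpa [mem_ball, dist_eq_norm] using hz)
  have hderiv : ∀ z ∈ ball (0:ℂ) 1,
      HasDerivAt fb ((1 - z ^ 2) / (1 + (b:ℂ) * z + z ^ 2) ^ 2) z := by
    intro z hz
    have h1 : HasDerivAt (fun w : ℂ => (1 : ℂ) + (b:ℂ) * w + w ^ 2) ((b:ℂ) + 2 * z) z := by
      have := ((hasDerivAt_id z).const_mul (b:ℂ)).const_add 1 |>.add (hasDerivAt_pow 2 z)
      simp at this; exact this
    have h2 := (hasDerivAt_id z).div h1 (hden z hz)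
    rw [hfb]
    exact h2.congr_deriv (by simp only [id]; ring)
  -- derivative of gb everywhere
  have hgderiv : ∀ z : ℂ, HasDerivAt gb (1 + 2 * z / (b:ℂ)) z := by
    intro z
    have := (hasDerivAt_id z).add ((hasDerivAt_pow 2 z).div_const (b:ℂ))
    rw [hgb]
    exact this.congr_deriv (by push_cast; ring)
  refine ⟨⟨?_, ?_, ?_, ?_⟩, ?_, ?_, ?_⟩
  · -- analytic
    rw [hfb]
    exact analyticOn_id.div
      ((analyticOn_const.add (analyticOn_const.mul analyticOn_id)).add
        (analyticOn_id.pow 2)) hden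
  · simp [hfb]
  · have := (hderiv 0 (by simp)).deriv
    simpa using this
  · intro z hz hz0
    have hd := (hderiv z hz).deriv
    have hdz := hden z hz
    have hfz : fb z = z / (1 + (b:ℂ) * z + z ^ 2) := by rw [hfb]
    have key : (z / fb z) ^ 2 * deriv fb z - 1 = -z ^ 2 := by
      rw [hd, hfz]
      field_simp
      rw [mul_div_cancel_left₀ _ (by rw [mul_comm z]; exact hdz)]; ring
    rw [key]
    have hzn : ‖z‖ < 1 := by simpa [mem_ball, dist_eq_norm] using hz
    calc ‖-z ^ 2‖ = ‖z‖ ^ 2 := by simp [norm_pow]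
    _ < 1 := by nlinarith [norm_nonneg z]
  · -- starlike
    intro z hz0 hzb
    have hzne : z ≠ 0 := by simpa [norm_pos_iff] using hz0
    have hbz : (b:ℂ) + z ≠ 0 := by
      intro h
      have : z = -(b:ℂ) := by linear_combination h
      rw [this] at hzb
      simp [Complex.norm_real, abs_of_pos hb0] at hzb
      linarith
    have hgz : gb z ≠ 0 := by
      rw [hgb]
      have : z + z ^ 2 / (b:ℂ) = z * ((b:ℂ) + z) / (b:ℂ) := by field_simp
      simp only [this]
      exact div_ne_zero (mul_ne_zero hzne hbz) hbC
    have hq : z * deriv gb z / gb z = ((b:ℂ) + 2 * z) / ((b:ℂ) + z) := by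
      rw [(hgderiv z).deriv, hgb]
      rw [div_eq_div_iff (by rw [hgb] at hgz; exact hgz) hbz]
      field_simp
    rw [hq, Complex.div_re]
    have hns : 0 < Complex.normSq ((b:ℂ) + z) := Complex.normSq_pos.2 hbz
    have hre : ((b:ℂ) + 2 * z).re = b + 2 * z.re := by simp
    have him : ((b:ℂ) + 2 * z).im = 2 * z.im := by simp
    have hre2 : ((b:ℂ) + z).re = b + z.re := by simp
    have him2 : ((b:ℂ) + z).im = z.im := by simp
    rw [hre, him, hre2, him2]
    have hxy : z.re ^ 2 + z.im ^ 2 < b ^ 2 / 4 := by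
      have h1 : z.re ^ 2 + z.im ^ 2 = ‖z‖ ^ 2 := by
        rw [Complex.sq_norm, Complex.normSq_apply]; ring
      nlinarith [norm_nonneg z]
    have hnum : 0 < (b + 2 * z.re) * (b + z.re) + 2 * z.im * z.im := by
      nlinarith [sq_nonneg (b / 2 + z.re), sq_nonneg z.im]
    have := div_pos hnum hns
    calc (0:ℝ) < ((b + 2 * z.re) * (b + z.re) + 2 * z.im * z.im) / Complex.normSq ((b:ℂ) + z) := this
    _ = (b + 2 * z.re) * (b + z.re) / Complex.normSq ((b:ℂ) + z)
        + 2 * z.im * z.im / Complex.normSq ((b:ℂ) + z) := by ring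
  · rw [(hgderiv _).deriv]
    field_simp
    norm_num
  · intro r hr
    intro hInj
    set ε : ℝ := (r - b / 2) / 2 with hε
    have hε0 : 0 < ε := by simp [hε]; linarith
    have hεr : b / 2 + ε < r := by simp [hε]; linarith
    have hz : ((-(b/2) + ε : ℝ) : ℂ) ∈ ball (0:ℂ) r := by
      simp only [mem_ball, dist_zero_right, Complex.norm_real, Real.norm_eq_abs]
      rw [abs_lt]; constructor <;> [linarith; linarith]
    have hw : ((-(b/2) - ε : ℝ) : ℂ) ∈ ball (0:ℂ) r := by
      simp only [mem_ball, dist_zero_right, Complex.norm_real, Real.norm_eq_abs]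
      rw [abs_lt]; constructor <;> [linarith; linarith]
    have heq : gb ((-(b/2) + ε : ℝ) : ℂ) = gb ((-(b/2) - ε : ℝ) : ℂ) := by
      rw [hgb]
      push_cast
      field_simp
      ring
    have := hInj hz hw heq
    have : (-(b/2) + ε : ℝ) = (-(b/2) - ε : ℝ) := by exact_mod_cast this
    linarith
end
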